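/- arXiv:2109.10605 — 10 statements merged into one kernel-verified Lean document; each statement's English description precedes it below -/
import Mathlib

section
/- Let x ∈ 𝒳 and let i ∈ Supp(x) be a variable node of the tangent digraph 𝒟_x. Then there exists x' ∈ 𝒳 with x'_i < x_i and x'_j = x_j for every j ≠ i. -/
open scoped Classical

noncomputable section

/-- Max-plus matrix-vector product: `(A ⊗ x) i = max_j (A i j + x j)`. -/
def mpApply {n : ℕ} (A : Matrix (Fin n) (Fin n) (WithBot ℝ)) (x : Fin n → WithBot ℝ)
    (i : Fin n) : WithBot ℝ :=
  Finset.univ.sup fun j => A i j + x j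

/-- The solution set `𝒳` of `A ⊗ x ≥ x`, `x ≠ -∞`. -/
def SuperEig {n : ℕ} (A : Matrix (Fin n) (Fin n) (WithBot ℝ)) : Set (Fin n → WithBot ℝ) :=
  {x | (∀ i, x i ≤ mpApply A x i) ∧ x ≠ fun _ => (⊥ : WithBot ℝ)}

/-- `𝒳' = 𝒳 ∪ {-∞}`. -/
def SuperEig' {n : ℕ} (A : Matrix (Fin n) (Fin n) (WithBot ℝ)) : Set (Fin n → WithBot ℝ) :=
  SuperEig A ∪ {fun _ => (⊥ : WithBot ℝ)}

/-- Support of a vector. -/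
def Supp {n : ℕ} (x : Fin n → WithBot ℝ) : Set (Fin n) := {i | x i ≠ ⊥}

/-- `v` is an extremal in `𝒳'`. -/
def IsExtremal {n : ℕ} (A : Matrix (Fin n) (Fin n) (WithBot ℝ)) (v : Fin n → WithBot ℝ) :
    Prop :=
  v ∈ SuperEig' A ∧
    ∀ y ∈ SuperEig' A, ∀ z ∈ SuperEig' A, v = (fun i => y i ⊔ z i) → v = y ∨ v = z

/-- `Arc A x a b` : there is an arc from `a` to `b` in the tangent digraph `𝒟ₓ`, i.e.,
`a, b ∈ Supp x`, `A b a + x a = x b` and `A b k + x k ≤ x b` for all `k`. -/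
def Arc {n : ℕ} (A : Matrix (Fin n) (Fin n) (WithBot ℝ)) (x : Fin n → WithBot ℝ)
    (a b : Fin n) : Prop :=
  x a ≠ ⊥ ∧ x b ≠ ⊥ ∧ A b a + x a = x b ∧ ∀ k, A b k + x k ≤ x b

/-- `i` is a I-variable node: no outgoing arc other than possibly the loop `(i,i)`. -/
def IVar {n : ℕ} (A : Matrix (Fin n) (Fin n) (WithBot ℝ)) (x : Fin n → WithBot ℝ)
    (i : Fin n) : Prop :=
  x i ≠ ⊥ ∧ ∀ j, Arc A x i j → j = i

/-- `i` is a II-variable node: the endnode of any outgoing arc from `i` except the loop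
has another incoming arc. -/
def IIVar {n : ℕ} (A : Matrix (Fin n) (Fin n) (WithBot ℝ)) (x : Fin n → WithBot ℝ)
    (i : Fin n) : Prop :=
  x i ≠ ⊥ ∧ ∀ j, j ≠ i → Arc A x i j → ∃ k, k ≠ i ∧ Arc A x k j

/-- `i` is a variable node: I-variable or II-variable. -/
def VarNode {n : ℕ} (A : Matrix (Fin n) (Fin n) (WithBot ℝ)) (x : Fin n → WithBot ℝ)
    (i : Fin n) : Prop :=
  IVar A x i ∨ IIVar A x i

/-- `i` is an invariable node: some outgoing arc `(i,j)` with `j ≠ i` is the only incoming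
arc of `j`. -/
def Invariable {n : ℕ} (A : Matrix (Fin n) (Fin n) (WithBot ℝ)) (x : Fin n → WithBot ℝ)
    (i : Fin n) : Prop :=
  x i ≠ ⊥ ∧ ∃ j, j ≠ i ∧ Arc A x i j ∧ ∀ k, Arc A x k j → k = i

/-- `W` is an isolated node set in `𝒟ₓ`: `W ⊆ Supp x` and no arc joins `W` and its
complement in either direction. -/
def IsolatedSet {n : ℕ} (A : Matrix (Fin n) (Fin n) (WithBot ℝ)) (x : Fin n → WithBot ℝ)
    (W : Set (Fin n)) : Prop :=
  W ⊆ Supp x ∧ ∀ a b, Arc A x a b → (a ∈ W ↔ b ∈ W)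

/-- `𝒳^{≤ x}`: solutions below `x` and different from `x`. -/
def BelowSet {n : ℕ} (A : Matrix (Fin n) (Fin n) (WithBot ℝ)) (x : Fin n → WithBot ℝ) :
    Set (Fin n → WithBot ℝ) :=
  {y ∈ SuperEig A | y ≤ x ∧ y ≠ x}

/-- A cycle of length `k ≥ 1` in the tangent digraph `𝒟ₓ`, given by the nodes
`c 0, c 1, …, c (k-1), c 0`. Its node set is `c '' Set.Iio k`. -/
def IsCycle {n : ℕ} (A : Matrix (Fin n) (Fin n) (WithBot ℝ)) (x : Fin n → WithBot ℝ)
    (k : ℕ) (c : ℕ → Fin n) : Prop :=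
  1 ≤ k ∧ ∀ t < k, Arc A x (c t) (c ((t + 1) % k))

/-- a variable node can be lowered within `𝒳`. -/
theorem stmt2 {n : ℕ} (A : Matrix (Fin n) (Fin n) (WithBot ℝ)) (x : Fin n → WithBot ℝ)
    (hx : x ∈ SuperEig A) (i : Fin n) (hi : i ∈ Supp x) (hvar : VarNode A x i) :
    ∃ x' ∈ SuperEig A, x' i < x i ∧ ∀ j, j ≠ i → x' j = x j := by
  classical
  obtain ⟨hle, -⟩ := hx
  obtain ⟨r, hxi⟩ := WithBot.ne_bot_iff_exists.mp hi
  set S : Fin n → WithBot ℝ := fun b => (Finset.univ.erase i).sup (fun k => A b k + x k)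
    with hSdef
  have hsup : ∀ b, mpApply A x b = (A b i + x i) ⊔ S b := by
    intro b
    rw [mpApply, ← Finset.insert_erase (Finset.mem_univ i), Finset.sup_insert]
  have hSle : ∀ b k, k ≠ i → A b k + x k ≤ S b := by
    intro b k hk
    exact Finset.le_sup (f := fun k => A b k + x k)
      (Finset.mem_erase.mpr ⟨hk, Finset.mem_univ k⟩)
  have K : ∀ b, b ≠ i → x b ≠ ⊥ → S b < x b → x b < A b i + x i := by
    intro b hbi hxb hSb
    have h1 : x b ≤ (A b i + x i) ⊔ S b := (hle b).trans_eq (hsup b)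
    have h2 : x b ≤ A b i + x i := by
      rcases le_sup_iff.mp h1 with h | h
      · exact h
      · exact absurd h (not_le_of_gt hSb)
    rcases h2.lt_or_eq with h | h
    · exact h
    · exfalso
      have harc : Arc A x i b := by
        refine ⟨hi, hxb, h.symm, fun k => ?_⟩
        by_cases hk : k = i
        · subst hk; exact h.ge
        · exact (hSle b k hk).trans hSb.le
      rcases hvar with ⟨-, hI⟩ | ⟨-, hII⟩
      · exact hbi (hI b harc)
      · obtain ⟨k, hki, hk⟩ := hII b hbi harc
        have hx2 := hSle b k hki
        rw [hk.2.2.1] at hx2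
        exact absurd hx2 (not_le_of_gt hSb)
  set δ : Fin n → ℝ := fun b => (A b i + x i).unbotD 0 - (x b).unbotD 0 with hδdef
  set P : Fin n → Prop := fun b => b ≠ i ∧ x b ≠ ⊥ ∧ S b < x b with hPdef
  have hKrep : ∀ b, P b → ∃ s t : ℝ, x b = (s : WithBot ℝ) ∧ A b i + x i = (t : WithBot ℝ)
      ∧ s < t := by
    rintro b ⟨hbi, hxb, hSb⟩
    obtain ⟨s, hs⟩ := WithBot.ne_bot_iff_exists.mp hxb
    have hK := K b hbi hxb hSb
    have ht : A b i + x i ≠ ⊥ := by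
      intro h
      rw [h, ← hs] at hK
      exact absurd hK (by simp)
    obtain ⟨t, htt⟩ := WithBot.ne_bot_iff_exists.mp ht
    refine ⟨s, t, hs.symm, htt.symm, ?_⟩
    rw [← hs, ← htt] at hK
    exact_mod_cast hK
  set f : Fin n → ℝ := fun b => if P b then min (δ b) 1 else 1 with hfdef
  set ε : ℝ := Finset.univ.inf' ⟨i, Finset.mem_univ i⟩ f with hεdef
  have hδpos : ∀ b, P b → 0 < δ b := by
    intro b hb
    obtain ⟨s, t, hs, ht, hst⟩ := hKrep b hb
    simp only [hδdef, hs, ht, WithBot.unbotD_coe]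
    linarith
  have hεpos : 0 < ε := by
    rw [hεdef]
    refine (Finset.lt_inf'_iff _).2 ?_
    intro b _
    by_cases hb : P b
    · simp only [hfdef, if_pos hb]
      exact lt_min (hδpos b hb) one_pos
    · simp only [hfdef, if_neg hb]
      exact one_pos
  have hεδ : ∀ b, P b → ε ≤ δ b := by
    intro b hb
    have h1 : ε ≤ f b := Finset.inf'_le f (Finset.mem_univ b)
    rw [hfdef] at h1
    simp only [if_pos hb] at h1
    exact h1.trans (min_le_left _ _)
  set x' : Fin n → WithBot ℝ := fun j => if j = i then ((r - ε : ℝ) : WithBot ℝ) else x j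
    with hx'def
  have hx'i : x' i = ((r - ε : ℝ) : WithBot ℝ) := by simp [hx'def]
  have hx'j : ∀ j, j ≠ i → x' j = x j := by
    intro j hj; simp [hx'def, hj]
  have hsup' : ∀ b, mpApply A x' b = (A b i + x' i) ⊔ S b := by
    intro b
    rw [mpApply, ← Finset.insert_erase (Finset.mem_univ i), Finset.sup_insert]
    congr 1
    apply Finset.sup_congr rfl
    intro k hk
    rw [hx'j k (Finset.mem_erase.mp hk).1]
  refine ⟨x', ⟨?_, ?_⟩, ?_, hx'j⟩
  · -- x' ≤ A ⊗ x'
    intro b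
    rw [hsup' b]
    by_cases hb : b = i
    · subst hb
      rw [hx'i]
      rcases le_or_gt (x b) (A b b + x b) with h | h
      · have hA : A b b ≠ ⊥ := by
          intro hbot
          rw [hbot, ← hxi] at h
          simp at h
        obtain ⟨a, ha⟩ := WithBot.ne_bot_iff_exists.mp hA
        have h0 : (0 : ℝ) ≤ a := by
          rw [← ha, ← hxi, ← WithBot.coe_add, WithBot.coe_le_coe] at h
          linarith
        have : ((r - ε : ℝ) : WithBot ℝ) ≤ A b b + ((r - ε : ℝ) : WithBot ℝ) := by
          rw [← ha, ← WithBot.coe_add, WithBot.coe_le_coe]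
          linarith
        exact this.trans le_sup_left
      · have hxS : x b ≤ S b := by
          have h1 : x b ≤ (A b b + x b) ⊔ S b := (hle b).trans_eq (hsup b)
          rcases le_sup_iff.mp h1 with h' | h'
          · exact absurd h' (not_le_of_gt h)
          · exact h'
        have : ((r - ε : ℝ) : WithBot ℝ) ≤ S b := by
          refine le_trans ?_ hxS
          rw [← hxi, WithBot.coe_le_coe]
          linarith
        exact this.trans le_sup_right
    · rw [hx'j b hb]
      by_cases hxb : x b = ⊥
      · rw [hxb]; exact bot_le
      rcases le_or_gt (x b) (S b) with h | h
      · exact h.trans le_sup_right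
      · have hPb : P b := ⟨hb, hxb, h⟩
        obtain ⟨s, t, hs, ht, hst⟩ := hKrep b hPb
        have hA : A b i ≠ ⊥ := by
          intro hbot
          rw [WithBot.add_eq_bot.mpr (Or.inl hbot)] at ht
          exact absurd ht.symm (by simp)
        obtain ⟨a, ha⟩ := WithBot.ne_bot_iff_exists.mp hA
        have hta : t = a + r := by
          rw [← ha, ← hxi, ← WithBot.coe_add, WithBot.coe_inj] at ht
          exact ht.symm
        have hδb : δ b = t - s := by
          simp [hδdef, hs, ht, WithBot.unbotD_coe]
        have hεb : ε ≤ δ b := hεδ b hPb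
        have : x b ≤ A b i + x' i := by
          rw [hs, hx'i, ← ha, ← WithBot.coe_add, WithBot.coe_le_coe]
          rw [hδb, hta] at hεb
          linarith
        exact this.trans le_sup_left
  · -- x' ≠ ⊥
    intro h
    have := congrFun h i
    rw [hx'i] at this
    exact absurd this (by simp)
  · -- x' i < x i
    rw [hx'i, ← hxi, WithBot.coe_lt_coe]
    linarith
end
end

section
/- Let x ∈ 𝒳. If there are at least two distinct variable nodes in the tangent digraph 𝒟_x, then x is not an extremal in 𝒳'. -/
open scoped Classical

noncomputable section

lemma lower_var {n : ℕ} (A : Matrix (Fin n) (Fin n) (WithBot ℝ)) (x : Fin n → WithBot ℝ)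
    (hx : x ∈ SuperEig A) (i : Fin n) (hi : VarNode A x i) :
    ∃ y ∈ SuperEig A, y i < x i ∧ ∀ k, k ≠ i → y k = x k := by
  have hxi : x i ≠ ⊥ := by rcases hi with h | h <;> exact h.1
  obtain ⟨r, hr⟩ := WithBot.ne_bot_iff_exists.mp hxi
  have claim1 : ∀ m, m ≠ i → x m ≠ ⊥ →
      (∃ k, k ≠ i ∧ x m ≤ A m k + x k) ∨ x m < A m i + x i := by
    intro m hm hmb
    by_contra hcon
    push_neg at hcon
    obtain ⟨h1, h2⟩ := hcon
    obtain ⟨k0, -, hk0⟩ := (Finset.le_sup_iff hmb.bot_lt).mp (hx.1 m)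
    have hk0i : k0 = i := by
      by_contra hne
      exact absurd hk0 (not_le.mpr (h1 k0 hne))
    subst hk0i
    have heq : A m k0 + x k0 = x m := le_antisymm h2 hk0
    have harc : Arc A x k0 m := by
      refine ⟨hxi, hmb, heq, fun k => ?_⟩
      by_cases hk : k = k0
      · subst hk; exact heq.le
      · exact (h1 k hk).le
    rcases hi with ⟨-, hI⟩ | ⟨-, hII⟩
    · exact hm (hI m harc)
    · obtain ⟨k, hk, harc'⟩ := hII m hm harc
      exact absurd harc'.2.2.1 (ne_of_lt (h1 k hk))
  -- choose ε
  set g : Fin n → ℝ := fun m =>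
    if h : x m ≠ ⊥ ∧ x m < A m i + x i then WithBot.unbotD 0 (A m i + x i) - WithBot.unbotD 0 (x m) else 1
    with hg_def
  have hg : ∀ m, 0 < g m := by
    intro m
    rw [hg_def]
    dsimp only
    split_ifs with h
    · obtain ⟨p, hp⟩ := WithBot.ne_bot_iff_exists.mp h.1
      obtain ⟨q, hq⟩ := WithBot.ne_bot_iff_exists.mp (ne_bot_of_gt h.2)
      rw [← hp, ← hq]
      simp only [WithBot.unbotD_coe]
      have : p < q := by
        rw [← WithBot.coe_lt_coe]
        rw [hp, hq]; exact h.2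
      linarith
    · exact one_pos
  set F : Finset ℝ := insert 1 (Finset.univ.image g) with hF_def
  have hFne : F.Nonempty := ⟨1, by simp [hF_def]⟩
  set ε : ℝ := F.min' hFne with hε_def
  have hε0 : 0 < ε := by
    have hmem : ε ∈ F := F.min'_mem hFne
    rw [hF_def] at hmem
    simp only [Finset.mem_insert, Finset.mem_image, Finset.mem_univ, true_and] at hmem
    rcases hmem with h | ⟨m, hm⟩
    · rw [h]; exact one_pos
    · rw [← hm]; exact hg m
  have hεg : ∀ m, ε ≤ g m := fun m =>
    Finset.min'_le _ _ (by rw [hF_def]; exact Finset.mem_insert_of_mem (Finset.mem_image_of_mem g (Finset.mem_univ m)))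
  have hle_mp : ∀ (w : Fin n → WithBot ℝ) (m k : Fin n), A m k + w k ≤ mpApply A w m := by
    intro w m k
    rw [mpApply]
    exact Finset.le_sup (f := fun j => A m j + w j) (Finset.mem_univ k)
  set y : Fin n → WithBot ℝ := fun k => if k = i then ((r - ε : ℝ) : WithBot ℝ) else x k
    with hy_def
  have hyi : y i = ((r - ε : ℝ) : WithBot ℝ) := by simp [hy_def]
  have hyk : ∀ k, k ≠ i → y k = x k := by intro k hk; simp [hy_def, hk]
  refine ⟨y, ⟨?_, ?_⟩, ?_, hyk⟩
  · -- inequalities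
    intro m
    by_cases hmi : m = i
    · subst hmi
      obtain ⟨k0, -, hk0⟩ := (Finset.le_sup_iff hxi.bot_lt).mp (hx.1 m)
      have hxy : x k0 ≤ y k0 + (ε : WithBot ℝ) := by
        by_cases hk : k0 = m
        · subst hk
          rw [hyi, ← hr, ← WithBot.coe_add, WithBot.coe_le_coe]
          linarith
        · rw [hyk k0 hk]
          nth_rewrite 1 [← add_zero (x k0)]
          exact add_le_add_right (by exact_mod_cast hε0.le) _
      have hchain : (r : WithBot ℝ) ≤ (A m k0 + y k0) + (ε : WithBot ℝ) := by
        calc (r : WithBot ℝ) = x m := hr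
          _ ≤ A m k0 + x k0 := hk0
          _ ≤ A m k0 + (y k0 + (ε : WithBot ℝ)) := add_le_add_right hxy _
          _ = (A m k0 + y k0) + (ε : WithBot ℝ) := (add_assoc _ _ _).symm
      have : ((r - ε : ℝ) : WithBot ℝ) ≤ A m k0 + y k0 := by
        rcases eq_or_ne (A m k0 + y k0) ⊥ with hb | hb
        · rw [hb] at hchain; simp at hchain
        · obtain ⟨s, hs⟩ := WithBot.ne_bot_iff_exists.mp hb
          rw [← hs] at hchain ⊢
          rw [← WithBot.coe_add, WithBot.coe_le_coe] at hchain
          rw [WithBot.coe_le_coe]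
          linarith
      rw [hyi]
      exact this.trans (hle_mp y m k0)
    · rw [hyk m hmi]
      rcases eq_or_ne (x m) ⊥ with hmb | hmb
      · rw [hmb]; exact bot_le
      rcases claim1 m hmi hmb with ⟨k, hk, hle⟩ | hlt
      · rw [← hyk k (by rintro rfl; exact hk rfl)] at hle
        exact hle.trans (hle_mp y m k)
      · obtain ⟨p, hp⟩ := WithBot.ne_bot_iff_exists.mp hmb
        have hqb : A m i + x i ≠ ⊥ := ne_bot_of_gt hlt
        have hab : A m i ≠ ⊥ := by
          intro h; rw [h] at hqb; simp at hqb
        obtain ⟨a, ha⟩ := WithBot.ne_bot_iff_exists.mp hab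
        have hgm : g m = (a + r) - p := by
          rw [hg_def]
          dsimp only
          rw [dif_pos ⟨hmb, hlt⟩, ← hp, ← ha, ← hr, ← WithBot.coe_add]
          simp only [WithBot.unbotD_coe]
        have hεm := hεg m
        rw [hgm] at hεm
        have hplt : x m ≤ A m i + y i := by
          rw [← hp, ← ha, hyi, ← WithBot.coe_add, WithBot.coe_le_coe]
          linarith
        exact hplt.trans (hle_mp y m i)
  · -- nonbot
    intro h
    have := congrFun h i
    rw [hyi] at this
    exact WithBot.coe_ne_bot this
  · -- y i < x i
    rw [hyi, ← hr, WithBot.coe_lt_coe]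
    linarith

/-- two distinct variable nodes imply `x` is not an extremal in `𝒳'`. -/
theorem stmt5 {n : ℕ} (A : Matrix (Fin n) (Fin n) (WithBot ℝ)) (x : Fin n → WithBot ℝ)
    (hx : x ∈ SuperEig A) (i j : Fin n) (hij : i ≠ j)
    (hi : VarNode A x i) (hj : VarNode A x j) : ¬ IsExtremal A x := by
  obtain ⟨y, hy, hyi, hyk⟩ := lower_var A x hx i hi
  obtain ⟨z, hz, hzj, hzk⟩ := lower_var A x hx j hj
  rintro ⟨-, hext⟩
  have hsup : x = fun m => y m ⊔ z m := by
    funext m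
    by_cases hmi : m = i
    · subst hmi
      rw [hzk m hij, sup_eq_right.mpr hyi.le]
    · by_cases hmj : m = j
      · subst hmj
        rw [hyk m (fun h => hij h.symm), sup_eq_left.mpr hzj.le]
      · rw [hyk m hmi, hzk m hmj, sup_idem]
  rcases hext y (Or.inl hy) z (Or.inl hz) hsup with h | h
  · exact absurd (congrFun h i) (ne_of_gt hyi)
  · exact absurd (congrFun h j) (ne_of_gt hzj)
end
end

section
/- Let x ∈ 𝒳 and let i ∈ Supp(x) be an invariable node of the tangent digraph 𝒟_x. Then x' ∉ 𝒳 for every x' ∈ R̄^n satisfying x'_i < x_i and x'_j = x_j for all j ≠ i. -/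
open scoped Classical

noncomputable section

/-- an invariable node cannot be lowered within `𝒳`. -/
theorem stmt6 {n : ℕ} (A : Matrix (Fin n) (Fin n) (WithBot ℝ)) (x : Fin n → WithBot ℝ)
    (hx : x ∈ SuperEig A) (i : Fin n) (hi : i ∈ Supp x) (hinv : Invariable A x i) :
    ∀ x' : Fin n → WithBot ℝ, x' i < x i → (∀ j, j ≠ i → x' j = x j) →
      x' ∉ SuperEig A := by
  intro x' hlt heq hx'
  obtain ⟨hxi, j, hji, ⟨hxi', hxj, harc, hub⟩, huniq⟩ := hinv
  have hxj' : x' j = x j := heq j hji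
  have hkey : ∀ k, A j k + x' k < x j := by
    intro k
    by_cases hk : k = i
    · subst hk
      have hAji : A j k ≠ ⊥ := by
        intro h
        rw [h, WithBot.bot_add] at harc
        exact hxj harc.symm
      calc A j k + x' k < A j k + x k := WithBot.add_lt_add_left hAji hlt
        _ = x j := harc
    · rw [heq k hk]
      rcases lt_or_eq_of_le (hub k) with h | h
      · exact h
      · exfalso
        have hxk : x k ≠ ⊥ := by
          intro hb
          rw [hb, WithBot.add_bot] at h
          exact hxj h.symm
        exact hk (huniq k ⟨hxk, hxj, h, hub⟩)
  have hle := hx'.1 j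
  rw [hxj'] at hle
  have hsup : mpApply A x' j < x j := by
    rw [mpApply]
    exact (Finset.sup_lt_iff (Ne.bot_lt hxj)).2 fun k _ => hkey k
  exact absurd hle (not_le_of_gt hsup)
end
end

section
/- Let x ∈ 𝒳. If there exists a nonempty proper subset of Supp(x) that is isolated in the tangent digraph 𝒟_x, then x is not an extremal in 𝒳'. -/
open scoped Classical

noncomputable section

/-- The vector `x` shifted down by `ε` outside `V`. -/
def shiftVec {n : ℕ} (x : Fin n → WithBot ℝ) (V : Set (Fin n)) (ε : ℝ)
    (i : Fin n) : WithBot ℝ :=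
  if i ∈ V then x i else x i + ((-ε : ℝ) : WithBot ℝ)

lemma add_neg_coe_le {n : ℕ} (x : Fin n → WithBot ℝ) (ε : ℝ) (hε : 0 < ε)
    (i : Fin n) : x i + ((-ε : ℝ) : WithBot ℝ) ≤ x i := by
  have h1 : x i + ((-ε : ℝ) : WithBot ℝ) ≤ x i + ((0 : ℝ) : WithBot ℝ) :=
    add_le_add_right (by exact_mod_cast (neg_nonpos.mpr hε.le)) _
  rwa [WithBot.coe_zero, add_zero] at h1

lemma shiftVec_le {n : ℕ} (x : Fin n → WithBot ℝ) (V : Set (Fin n)) (ε : ℝ)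
    (hε : 0 < ε) (i : Fin n) : shiftVec x V ε i ≤ x i := by
  unfold shiftVec
  split
  · exact le_rfl
  · exact add_neg_coe_le x ε hε i

lemma shiftVec_ge {n : ℕ} (x : Fin n → WithBot ℝ) (V : Set (Fin n)) (ε : ℝ) (hε : 0 < ε)
    (i : Fin n) : x i + ((-ε : ℝ) : WithBot ℝ) ≤ shiftVec x V ε i := by
  unfold shiftVec
  split
  · exact add_neg_coe_le x ε hε i
  · exact le_rfl

lemma shiftVec_superEig {n : ℕ} (A : Matrix (Fin n) (Fin n) (WithBot ℝ))
    (x : Fin n → WithBot ℝ) (hxe : ∀ i, x i ≤ mpApply A x i)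
    (V : Set (Fin n)) (hV : IsolatedSet A x V) (ε : ℝ) (hε : 0 < ε)
    (hsup : ∀ i, x i ≠ ⊥ → x i < mpApply A x i →
      x i + ((ε : ℝ) : WithBot ℝ) ≤ mpApply A x i) :
    ∀ i, shiftVec x V ε i ≤ mpApply A (shiftVec x V ε) i := by
  intro i
  by_cases hib : x i = ⊥
  · have : shiftVec x V ε i = ⊥ := by
      unfold shiftVec; split
      · exact hib
      · rw [hib, WithBot.bot_add]
    exact this.le.trans bot_le
  · have hne : Nonempty (Fin n) := ⟨i⟩
    obtain ⟨j, -, hj⟩ := Finset.exists_mem_eq_sup Finset.univ Finset.univ_nonempty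
      (fun j => A i j + x j)
    have hj : mpApply A x i = A i j + x j := hj
    have hyj : A i j + (x j + ((-ε : ℝ) : WithBot ℝ)) ≤ mpApply A (shiftVec x V ε) i := by
      refine le_trans (add_le_add_right (shiftVec_ge x V ε hε j) (A i j)) ?_
      exact Finset.le_sup (f := fun j => A i j + shiftVec x V ε j) (Finset.mem_univ j)
    rcases (hxe i).lt_or_eq with hstrict | heq
    · have h1 : x i ≤ A i j + (x j + ((-ε : ℝ) : WithBot ℝ)) := by
        have h2 : x i + ((ε : ℝ) : WithBot ℝ) + ((-ε : ℝ) : WithBot ℝ)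
            ≤ (A i j + x j) + ((-ε : ℝ) : WithBot ℝ) := by
          refine add_le_add_left ?_ _
          rw [← hj]; exact hsup i hib hstrict
        have h3 : x i + ((ε : ℝ) : WithBot ℝ) + ((-ε : ℝ) : WithBot ℝ) = x i := by
          rw [add_assoc, ← WithBot.coe_add, add_neg_cancel, WithBot.coe_zero, add_zero]
        rw [h3, add_assoc] at h2
        exact h2
      exact le_trans (le_trans (shiftVec_le x V ε hε i) h1) hyj
    · -- x i = mpApply A x i : arc from j to i
      have hj' : A i j + x j = x i := by rw [heq, hj]
      have hjb : x j ≠ ⊥ := by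
        intro hb
        rw [hb, WithBot.add_bot] at hj'
        exact hib hj'.symm
      have harc : Arc A x j i := by
        refine ⟨hjb, hib, hj', fun k => ?_⟩
        rw [heq]
        exact Finset.le_sup (f := fun k => A i k + x k) (Finset.mem_univ k)
      have hmem := hV.2 j i harc
      by_cases hiV : i ∈ V
      · have hjV : j ∈ V := hmem.mpr hiV
        have : shiftVec x V ε i = A i j + shiftVec x V ε j := by
          unfold shiftVec
          rw [if_pos hiV, if_pos hjV, hj']
        rw [this]
        exact Finset.le_sup (f := fun j => A i j + shiftVec x V ε j) (Finset.mem_univ j)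
      · have hjV : j ∉ V := fun h => hiV (hmem.mp h)
        have : shiftVec x V ε i = A i j + shiftVec x V ε j := by
          unfold shiftVec
          rw [if_neg hiV, if_neg hjV, ← hj', add_assoc]
        rw [this]
        exact Finset.le_sup (f := fun j => A i j + shiftVec x V ε j) (Finset.mem_univ j)

lemma shiftVec_ne {n : ℕ} (x : Fin n → WithBot ℝ) (V : Set (Fin n)) (ε : ℝ)
    (hε : 0 < ε) (i : Fin n) (hib : x i ≠ ⊥) (hiV : i ∉ V) : shiftVec x V ε ≠ x := by
  intro h
  have h1 : shiftVec x V ε i = x i := congrFun h i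
  obtain ⟨a, ha⟩ := WithBot.ne_bot_iff_exists.mp hib
  rw [shiftVec, if_neg hiV, ← ha, ← WithBot.coe_add, WithBot.coe_eq_coe] at h1
  linarith

/-- a nonempty proper isolated subset of `Supp x` implies `x` is not an
extremal in `𝒳'`. -/
theorem stmt7 {n : ℕ} (A : Matrix (Fin n) (Fin n) (WithBot ℝ)) (x : Fin n → WithBot ℝ)
    (hx : x ∈ SuperEig A) (W : Set (Fin n)) (hne : W.Nonempty) (hss : W ⊂ Supp x)
    (hiso : IsolatedSet A x W) : ¬ IsExtremal A x := by
  obtain ⟨hxe, -⟩ := hx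
  -- choose ε
  set T : Finset (Fin n) :=
    Finset.univ.filter (fun i => x i ≠ ⊥ ∧ x i < mpApply A x i) with hT
  set g : Fin n → ℝ := fun i => (mpApply A x i).unbotD 0 - (x i).unbotD 0 with hg
  have hgfacts : ∀ i ∈ T, 0 < g i ∧ x i + ((g i : ℝ) : WithBot ℝ) = mpApply A x i := by
    intro i hi
    rw [hT, Finset.mem_filter] at hi
    obtain ⟨-, hib, hlt⟩ := hi
    obtain ⟨a, ha⟩ := WithBot.ne_bot_iff_exists.mp hib
    have hmb : mpApply A x i ≠ ⊥ := fun h => by rw [h] at hlt; exact (not_lt_bot hlt)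
    obtain ⟨b, hb⟩ := WithBot.ne_bot_iff_exists.mp hmb
    have hab : a < b := by rw [← ha, ← hb, WithBot.coe_lt_coe] at hlt; exact hlt
    have hgv : g i = b - a := by rw [hg]; simp [← ha, ← hb]
    constructor
    · rw [hgv]; linarith
    · rw [hgv, ← ha, ← hb, ← WithBot.coe_add, WithBot.coe_eq_coe]; ring
  set ε : ℝ := if h : T.Nonempty then T.inf' h g else 1 with hεdef
  have hε : 0 < ε := by
    rw [hεdef]
    split
    · rename_i h
      rw [Finset.lt_inf'_iff]
      exact fun i hi => (hgfacts i hi).1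
    · exact one_pos
  have hsup : ∀ i, x i ≠ ⊥ → x i < mpApply A x i →
      x i + ((ε : ℝ) : WithBot ℝ) ≤ mpApply A x i := by
    intro i hib hlt
    have hiT : i ∈ T := by rw [hT, Finset.mem_filter]; exact ⟨Finset.mem_univ i, hib, hlt⟩
    have hεle : ε ≤ g i := by
      rw [hεdef, dif_pos ⟨i, hiT⟩]
      exact Finset.inf'_le g hiT
    calc x i + ((ε : ℝ) : WithBot ℝ) ≤ x i + ((g i : ℝ) : WithBot ℝ) := by
          exact add_le_add_right (by exact_mod_cast hεle) _
      _ = mpApply A x i := (hgfacts i hiT).2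
  -- the two pieces
  set V' : Set (Fin n) := Supp x \ W with hV'
  have hisoW : IsolatedSet A x W := hiso
  have hisoV' : IsolatedSet A x V' := by
    constructor
    · exact fun i hi => hi.1
    · intro a b harc
      have h1 := hiso.2 a b harc
      have ha : a ∈ Supp x := harc.1
      have hb : b ∈ Supp x := harc.2.1
      rw [hV']
      constructor
      · intro h; exact ⟨hb, fun hw => h.2 (h1.mpr hw)⟩
      · intro h; exact ⟨ha, fun hw => h.2 (h1.mp hw)⟩
  obtain ⟨p, hpV'⟩ := Set.exists_of_ssubset hss
  have hpV' : p ∈ V' := ⟨hpV'.1, hpV'.2⟩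
  obtain ⟨q, hqW⟩ := hne
  have hqS : q ∈ Supp x := hss.1 hqW
  have hqV' : q ∉ V' := fun h => h.2 hqW
  -- membership in SuperEig
  have hyW : shiftVec x W ε ∈ SuperEig A := by
    refine ⟨shiftVec_superEig A x hxe W hisoW ε hε hsup, ?_⟩
    intro h
    have := congrFun h q
    rw [shiftVec, if_pos hqW] at this
    exact hqS this
  have hyV' : shiftVec x V' ε ∈ SuperEig A := by
    refine ⟨shiftVec_superEig A x hxe V' hisoV' ε hε hsup, ?_⟩
    intro h
    have := congrFun h p
    rw [shiftVec, if_pos hpV'] at this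
    exact hpV'.1 this
  -- decomposition
  have hdec : x = fun i => shiftVec x W ε i ⊔ shiftVec x V' ε i := by
    funext i
    by_cases hiS : x i = ⊥
    · have h1 : shiftVec x W ε i = ⊥ := by
        unfold shiftVec; split
        · exact hiS
        · rw [hiS, WithBot.bot_add]
      have h2 : shiftVec x V' ε i = ⊥ := by
        unfold shiftVec; split
        · exact hiS
        · rw [hiS, WithBot.bot_add]
      rw [h1, h2, hiS]; rfl
    · by_cases hiW : i ∈ W
      · have h1 : shiftVec x W ε i = x i := by rw [shiftVec, if_pos hiW]
        rw [h1]
        exact (sup_eq_left.mpr (shiftVec_le x V' ε hε i)).symm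
      · have hiV' : i ∈ V' := ⟨hiS, hiW⟩
        have h1 : shiftVec x V' ε i = x i := by rw [shiftVec, if_pos hiV']
        rw [h1]
        exact (sup_eq_right.mpr (shiftVec_le x W ε hε i)).symm
  intro hext
  rcases hext.2 (shiftVec x W ε) (Or.inl hyW) (shiftVec x V' ε) (Or.inl hyV') hdec with h | h
  · exact shiftVec_ne x W ε hε p hpV'.1 hpV'.2 h.symm
  · exact shiftVec_ne x V' ε hε q hqS hqV' h.symm
end
end

section
/- Let x ∈ 𝒳. If there are at least two cycles in the tangent digraph 𝒟_x whose node sets are disjoint, then x is not an extremal in 𝒳'. -/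
open scoped Classical

noncomputable section

namespace Stmt8Aux

variable {n : ℕ} (A : Matrix (Fin n) (Fin n) (WithBot ℝ)) (x : Fin n → WithBot ℝ)

/-- `i` is saturated: it has an incoming arc. -/
def MSat (i : Fin n) : Prop := ∃ j, Arc A x j i

/-- `M` is viable: every saturated member has an arc-predecessor in `M`. -/
def Viab (M : Set (Fin n)) : Prop := ∀ i ∈ M, MSat A x i → ∃ j ∈ M, Arc A x j i

lemma le_mp (i j : Fin n) : A i j + x j ≤ mpApply A x i :=
  Finset.le_sup (f := fun j => A i j + x j) (Finset.mem_univ j)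

lemma exists_argmax [NeZero n] (i : Fin n) : ∃ j, mpApply A x i = A i j + x j := by
  obtain ⟨j, -, h⟩ := Finset.exists_mem_eq_sup Finset.univ
    (Finset.univ_nonempty) (fun j => A i j + x j)
  exact ⟨j, h⟩

lemma sat_of_eq [NeZero n] {i : Fin n} (hbot : x i ≠ ⊥) (heq : mpApply A x i = x i) :
    MSat A x i := by
  obtain ⟨j, hj⟩ := exists_argmax A x i
  have hxi : A i j + x j = x i := by rw [← hj, heq]
  refine ⟨j, ?_, hbot, hxi, fun k => heq ▸ le_mp A x i k⟩
  intro h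
  rw [h, WithBot.add_bot] at hxi
  exact hbot hxi.symm

lemma lt_of_not_sat [NeZero n] {i : Fin n} (hle : x i ≤ mpApply A x i) (hbot : x i ≠ ⊥)
    (hn : ¬ MSat A x i) : x i < mpApply A x i :=
  lt_of_le_of_ne hle (fun h => hn (sat_of_eq A x hbot h.symm))

lemma exists_eps [NeZero n] (hle : ∀ i, x i ≤ mpApply A x i) :
    ∃ ε : ℝ, 0 < ε ∧ ∀ i, x i ≠ ⊥ → ¬ MSat A x i →
      x i + ((ε : ℝ) : WithBot ℝ) ≤ mpApply A x i := by
  have h : ∀ i : Fin n, ∃ ε : ℝ, 0 < ε ∧ (x i ≠ ⊥ → ¬ MSat A x i →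
      x i + ((ε : ℝ) : WithBot ℝ) ≤ mpApply A x i) := by
    intro i
    by_cases hc : x i ≠ ⊥ ∧ ¬ MSat A x i
    · obtain ⟨hbot, hn⟩ := hc
      have hlt := lt_of_not_sat A x (hle i) hbot hn
      obtain ⟨r, hr⟩ := WithBot.ne_bot_iff_exists.mp hbot
      have hmpbot : mpApply A x i ≠ ⊥ := by
        intro h0; rw [h0] at hlt; exact absurd hlt (by simp)
      obtain ⟨s, hs⟩ := WithBot.ne_bot_iff_exists.mp hmpbot
      rw [← hr, ← hs] at hlt
      have hrs : r < s := WithBot.coe_lt_coe.mp hlt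
      refine ⟨s - r, by linarith, fun _ _ => ?_⟩
      rw [← hr, ← hs, ← WithBot.coe_add]
      exact WithBot.coe_le_coe.mpr (by linarith)
    · exact ⟨1, one_pos, fun h1 h2 => absurd ⟨h1, h2⟩ hc⟩
  choose f hf using h
  refine ⟨Finset.univ.inf' Finset.univ_nonempty f, ?_, ?_⟩
  · rw [Finset.lt_inf'_iff]
    exact fun i _ => (hf i).1
  · intro i hbot hn
    refine le_trans ?_ ((hf i).2 hbot hn)
    exact add_le_add_right (WithBot.coe_le_coe.mpr
      (Finset.inf'_le f (Finset.mem_univ i))) _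

/-- the lowered vector -/
def lower (M : Set (Fin n)) (ε : ℝ) : Fin n → WithBot ℝ :=
  fun i => if i ∈ M then x i else x i + ((-ε : ℝ) : WithBot ℝ)

lemma add_neg_coe_le (a : WithBot ℝ) {ε : ℝ} (hε : 0 < ε) :
    a + ((-ε : ℝ) : WithBot ℝ) ≤ a := by
  calc a + ((-ε : ℝ) : WithBot ℝ) ≤ a + ((0 : ℝ) : WithBot ℝ) :=
      add_le_add_right (WithBot.coe_le_coe.mpr (by linarith)) a
    _ = a := by rw [WithBot.coe_zero, add_zero]

lemma lower_le (M : Set (Fin n)) {ε : ℝ} (hε : 0 < ε) : ∀ i, lower x M ε i ≤ x i := by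
  intro i
  unfold lower
  split
  · exact le_rfl
  · exact add_neg_coe_le _ hε

lemma lower_ge (M : Set (Fin n)) {ε : ℝ} (hε : 0 < ε) :
    ∀ i, x i + ((-ε : ℝ) : WithBot ℝ) ≤ lower x M ε i := by
  intro i
  unfold lower
  split
  · exact add_neg_coe_le _ hε
  · exact le_rfl

lemma mp_lower_ge [NeZero n] (M : Set (Fin n)) {ε : ℝ} (hε : 0 < ε) (i : Fin n) :
    mpApply A x i + ((-ε : ℝ) : WithBot ℝ) ≤ mpApply A (lower x M ε) i := by
  obtain ⟨j, hj⟩ := exists_argmax A x i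
  rw [hj, add_assoc]
  calc A i j + (x j + ((-ε : ℝ) : WithBot ℝ)) ≤ A i j + lower x M ε j :=
      add_le_add_right (lower_ge x M hε j) _
    _ ≤ mpApply A (lower x M ε) i := le_mp A (lower x M ε) i j

lemma lower_mem [NeZero n] (hx : x ∈ SuperEig A) {M : Set (Fin n)} (hM : Viab A x M)
    {ε : ℝ} (hε : 0 < ε)
    (hgap : ∀ i, x i ≠ ⊥ → ¬ MSat A x i → x i + ((ε : ℝ) : WithBot ℝ) ≤ mpApply A x i) :
    lower x M ε ∈ SuperEig A := by
  obtain ⟨hle, hne⟩ := hx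
  constructor
  · intro i
    by_cases hbot : x i = ⊥
    · have h0 : lower x M ε i = ⊥ := by
        unfold lower; split
        · exact hbot
        · rw [hbot, WithBot.bot_add]
      rw [h0]; exact bot_le
    · by_cases hMem : i ∈ M
      · have hyi : lower x M ε i = x i := by unfold lower; rw [if_pos hMem]
        rw [hyi]
        by_cases hsat : MSat A x i
        · obtain ⟨j, hjM, hjarc⟩ := hM i hMem hsat
          have hyj : lower x M ε j = x j := by unfold lower; rw [if_pos hjM]
          calc x i = A i j + x j := hjarc.2.2.1.symm
            _ = A i j + lower x M ε j := by rw [hyj]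
            _ ≤ mpApply A (lower x M ε) i := le_mp A _ i j
        · have h1 := hgap i hbot hsat
          have h2 := mp_lower_ge A x M hε i
          have e1 : x i + ((ε : ℝ) : WithBot ℝ) + ((-ε : ℝ) : WithBot ℝ) = x i := by
            have hh : ε + -ε = 0 := by ring
            rw [add_assoc, ← WithBot.coe_add, hh, WithBot.coe_zero, add_zero]
          calc x i = x i + ((ε : ℝ) : WithBot ℝ) + ((-ε : ℝ) : WithBot ℝ) := e1.symm
            _ ≤ mpApply A x i + ((-ε : ℝ) : WithBot ℝ) := add_le_add_left h1 _
            _ ≤ mpApply A (lower x M ε) i := h2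
      · have hyi : lower x M ε i = x i + ((-ε : ℝ) : WithBot ℝ) := by
          unfold lower; rw [if_neg hMem]
        rw [hyi]
        calc x i + ((-ε : ℝ) : WithBot ℝ) ≤ mpApply A x i + ((-ε : ℝ) : WithBot ℝ) :=
            add_le_add_left (hle i) _
          _ ≤ mpApply A (lower x M ε) i := mp_lower_ge A x M hε i
  · intro h
    have hex : ∃ i, x i ≠ ⊥ := by
      by_contra hc
      push_neg at hc
      exact hne (funext fun i => hc i)
    obtain ⟨i, hi⟩ := hex
    have hyi : lower x M ε i ≠ ⊥ := by
      unfold lower; split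
      · exact hi
      · simp [WithBot.add_ne_bot, hi]
    exact hyi (congrFun h i)

lemma lower_ne {M : Set (Fin n)} {ε : ℝ} (hε : 0 < ε) {i : Fin n}
    (hbot : x i ≠ ⊥) (hMem : i ∉ M) : lower x M ε i ≠ x i := by
  unfold lower
  rw [if_neg hMem]
  obtain ⟨r, hr⟩ := WithBot.ne_bot_iff_exists.mp hbot
  rw [← hr, ← WithBot.coe_add]
  intro h
  have := WithBot.coe_inj.mp h
  linarith

lemma cycle_pred {k : ℕ} {c : ℕ → Fin n} (h : IsCycle A x k c) {t : ℕ} (ht : t < k) :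
    ∃ s < k, Arc A x (c s) (c t) := by
  obtain ⟨hk, harc⟩ := h
  have hklt : 0 < k := hk
  refine ⟨(t + (k - 1)) % k, Nat.mod_lt _ hklt, ?_⟩
  have h2 := harc ((t + (k - 1)) % k) (Nat.mod_lt _ hklt)
  have heq : ((t + (k - 1)) % k + 1) % k = t := by
    rw [Nat.mod_add_mod]
    have h3 : t + (k - 1) + 1 = t + k := by omega
    rw [h3, Nat.add_mod_right]
    exact Nat.mod_eq_of_lt ht
  rwa [heq] at h2

lemma cycle_viab {k : ℕ} {c : ℕ → Fin n} (h : IsCycle A x k c) :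
    Viab A x (c '' Set.Iio k) := by
  rintro i ⟨t, ht, rfl⟩ _
  obtain ⟨s, hs, harc⟩ := cycle_pred A x h ht
  exact ⟨c s, ⟨s, hs, rfl⟩, harc⟩

lemma cycle_supp {k : ℕ} {c : ℕ → Fin n} (h : IsCycle A x k c) {t : ℕ} (ht : t < k) :
    x (c t) ≠ ⊥ := by
  obtain ⟨s, hs, harc⟩ := cycle_pred A x h ht
  exact harc.2.1

end Stmt8Aux

open Stmt8Aux in
theorem stmt8' {n : ℕ} (A : Matrix (Fin n) (Fin n) (WithBot ℝ)) (x : Fin n → WithBot ℝ)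
    (hx : x ∈ SuperEig A) (k₁ k₂ : ℕ) (c₁ c₂ : ℕ → Fin n)
    (h₁ : IsCycle A x k₁ c₁) (h₂ : IsCycle A x k₂ c₂)
    (hd : Disjoint (c₁ '' Set.Iio k₁) (c₂ '' Set.Iio k₂)) : ¬ IsExtremal A x := by
  intro hext
  have hnz : NeZero n := by
    constructor
    intro h0
    subst h0
    exact (c₁ 0).elim0
  -- the two "avoiding" sets
  set M₁ : Set (Fin n) :=
    {i | ∃ V, Viab A x V ∧ (∀ t < k₁, c₁ t ∉ V) ∧ i ∈ V} with hM₁def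
  set M₂ : Set (Fin n) :=
    {i | ∃ V, Viab A x V ∧ (∀ t < k₂, c₂ t ∉ V) ∧ i ∈ V} with hM₂def
  have hviab₁ : Viab A x M₁ := by
    rintro i ⟨V, hV, hav, hiV⟩ hsat
    obtain ⟨j, hjV, hjarc⟩ := hV i hiV hsat
    exact ⟨j, ⟨V, hV, hav, hjV⟩, hjarc⟩
  have hviab₂ : Viab A x M₂ := by
    rintro i ⟨V, hV, hav, hiV⟩ hsat
    obtain ⟨j, hjV, hjarc⟩ := hV i hiV hsat
    exact ⟨j, ⟨V, hV, hav, hjV⟩, hjarc⟩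
  -- C₁ ⊆ M₂, C₂ ⊆ M₁
  have hC₁M₂ : ∀ t < k₁, c₁ t ∈ M₂ := by
    intro t ht
    refine ⟨c₁ '' Set.Iio k₁, cycle_viab A x h₁, ?_, ⟨t, ht, rfl⟩⟩
    intro s hs hmem
    exact Set.disjoint_right.mp hd ⟨s, hs, rfl⟩ hmem
  have hC₂M₁ : ∀ t < k₂, c₂ t ∈ M₁ := by
    intro t ht
    refine ⟨c₂ '' Set.Iio k₂, cycle_viab A x h₂, ?_, ⟨t, ht, rfl⟩⟩
    intro s hs hmem
    exact Set.disjoint_left.mp hd ⟨s, hs, rfl⟩ hmem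
  -- M₁ avoids C₁, M₂ avoids C₂
  have hM₁C₁ : ∀ t < k₁, c₁ t ∉ M₁ := by
    rintro t ht ⟨V, hV, hav, hmem⟩
    exact hav t ht hmem
  have hM₂C₂ : ∀ t < k₂, c₂ t ∉ M₂ := by
    rintro t ht ⟨V, hV, hav, hmem⟩
    exact hav t ht hmem
  -- adding a point to a viable set
  have hadd : ∀ (V : Set (Fin n)) (i j : Fin n), Viab A x V → j ∈ V → Arc A x j i →
      Viab A x (V ∪ {i}) := by
    intro V i j hV hjV harc m hm hsat
    rcases hm with hmV | hmi
    · obtain ⟨l, hlV, hlarc⟩ := hV m hmV hsat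
      exact ⟨l, Or.inl hlV, hlarc⟩
    · rw [Set.mem_singleton_iff] at hmi
      subst hmi
      exact ⟨j, Or.inl hjV, harc⟩
  -- cover : every support node is in M₁ ∪ M₂
  have hcover : ∀ i, x i ≠ ⊥ → i ∈ M₁ ∨ i ∈ M₂ := by
    by_contra hc
    push_neg at hc
    obtain ⟨i₀, hbot₀, hn₁₀, hn₂₀⟩ := hc
    set Bad : Set (Fin n) := {i | x i ≠ ⊥ ∧ i ∉ M₁ ∧ i ∉ M₂} with hBaddef
    have hBadC₁ : ∀ i ∈ Bad, ∀ t < k₁, i ≠ c₁ t := by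
      rintro i ⟨_, hn1, hn2⟩ t ht rfl
      exact hn2 (hC₁M₂ t ht)
    have hBadC₂ : ∀ i ∈ Bad, ∀ t < k₂, i ≠ c₂ t := by
      rintro i ⟨_, hn1, hn2⟩ t ht rfl
      exact hn1 (hC₂M₁ t ht)
    have hBadViab : Viab A x Bad := by
      rintro i hiBad hsat
      obtain ⟨j, hjarc⟩ := hsat
      obtain ⟨hibot, hin1, hin2⟩ := hiBad
      refine ⟨j, ⟨hjarc.1, ?_, ?_⟩, hjarc⟩
      · -- j ∉ M₁
        rintro ⟨V, hV, hav, hjV⟩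
        apply hin1
        refine ⟨V ∪ {i}, hadd V i j hV hjV hjarc, ?_, Or.inr rfl⟩
        intro t ht hmem
        rcases hmem with h' | h'
        · exact hav t ht h'
        · rw [Set.mem_singleton_iff] at h'
          exact hBadC₁ i ⟨hibot, hin1, hin2⟩ t ht h'.symm
      · -- j ∉ M₂
        rintro ⟨V, hV, hav, hjV⟩
        apply hin2
        refine ⟨V ∪ {i}, hadd V i j hV hjV hjarc, ?_, Or.inr rfl⟩
        intro t ht hmem
        rcases hmem with h' | h'
        · exact hav t ht h'
        · rw [Set.mem_singleton_iff] at h'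
          exact hBadC₂ i ⟨hibot, hin1, hin2⟩ t ht h'.symm
    have hmem₀ : i₀ ∈ M₁ := by
      refine ⟨Bad, hBadViab, ?_, ⟨hbot₀, hn₁₀, hn₂₀⟩⟩
      intro t ht hmem
      exact hBadC₁ _ hmem t ht rfl
    exact hn₁₀ hmem₀
  -- pick ε
  obtain ⟨ε, hε, hgap⟩ := exists_eps A x hx.1
  -- y agrees with x on M₂ (contains C₁), z agrees with x on M₁ (contains C₂)
  set y := lower x M₂ ε with hydef
  set z := lower x M₁ ε with hzdef
  have hy : y ∈ SuperEig A := lower_mem A x hx hviab₂ hε hgap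
  have hz : z ∈ SuperEig A := lower_mem A x hx hviab₁ hε hgap
  have hsup : x = fun i => y i ⊔ z i := by
    funext i
    show x i = y i ⊔ z i
    by_cases hbot : x i = ⊥
    · have hy' : y i = ⊥ := le_bot_iff.mp (hbot ▸ lower_le x M₂ hε i)
      have hz' : z i = ⊥ := le_bot_iff.mp (hbot ▸ lower_le x M₁ hε i)
      rw [hy', hz', hbot, sup_idem]
    · rcases hcover i hbot with h1 | h2
      · have hz' : z i = x i := by rw [hzdef]; unfold lower; rw [if_pos h1]
        have hy' : y i ≤ x i := lower_le x M₂ hε i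
        rw [hz', sup_comm, sup_eq_left.mpr (hz' ▸ hy' : y i ≤ x i)]
      · have hy' : y i = x i := by rw [hydef]; unfold lower; rw [if_pos h2]
        have hz' : z i ≤ x i := lower_le x M₁ hε i
        rw [hy', sup_eq_left.mpr hz']
  rcases hext.2 y (Or.inl hy) z (Or.inl hz) hsup with hxy | hxz
  · have h0 : (0:ℕ) < k₂ := h₂.1
    have hne := lower_ne x hε (cycle_supp A x h₂ h0) (hM₂C₂ 0 h0)
    rw [← hydef, ← hxy] at hne
    exact hne rfl
  · have h0 : (0:ℕ) < k₁ := h₁.1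
    have hne := lower_ne x hε (cycle_supp A x h₁ h0) (hM₁C₁ 0 h0)
    rw [← hzdef, ← hxz] at hne
    exact hne rfl

/-- two node-disjoint cycles in `𝒟ₓ` imply `x` is not an extremal in `𝒳'`. -/
theorem stmt8 {n : ℕ} (A : Matrix (Fin n) (Fin n) (WithBot ℝ)) (x : Fin n → WithBot ℝ)
    (hx : x ∈ SuperEig A) (k₁ k₂ : ℕ) (c₁ c₂ : ℕ → Fin n)
    (h₁ : IsCycle A x k₁ c₁) (h₂ : IsCycle A x k₂ c₂)
    (hd : Disjoint (c₁ '' Set.Iio k₁) (c₂ '' Set.Iio k₂)) : ¬ IsExtremal A x := by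
  exact stmt8' A x hx k₁ k₂ c₁ c₂ h₁ h₂ hd
end
end

section
/- Let x ∈ 𝒳. If no nonempty proper subset of Supp(x) is isolated in the tangent digraph 𝒟_x and every node of Supp(x) is invariable in 𝒟_x, then for every x' ∈ 𝒳^{≤x} one has x'_i < x_i for all i ∈ Supp(x). -/
open scoped Classical

noncomputable section

/-- no nonempty proper isolated subset and all nodes invariable imply that
any `x' ∈ 𝒳^{≤x}` satisfies `x'ᵢ < xᵢ` on all of `Supp x`. -/
theorem stmt9 {n : ℕ} (A : Matrix (Fin n) (Fin n) (WithBot ℝ)) (x : Fin n → WithBot ℝ)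
    (hx : x ∈ SuperEig A)
    (hiso : ∀ W : Set (Fin n), W.Nonempty → W ⊂ Supp x → ¬ IsolatedSet A x W)
    (hinv : ∀ i ∈ Supp x, Invariable A x i) :
    ∀ x' ∈ BelowSet A x, ∀ i ∈ Supp x, x' i < x i := by
  rintro x' ⟨hx'S, hle, hne⟩ i hi
  by_contra hcon
  have hxi : x' i = x i := le_antisymm (hle i) (not_lt.mp hcon)
  -- the equality set W and strict set U
  set W : Set (Fin n) := {a | a ∈ Supp x ∧ x' a = x a} with hW
  set U : Set (Fin n) := {a | a ∈ Supp x ∧ x' a < x a} with hU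
  have hWsub : W ⊆ Supp x := fun a ha => ha.1
  have hUsub : U ⊆ Supp x := fun a ha => ha.1
  have hpart : ∀ a ∈ Supp x, a ∈ W ∨ a ∈ U := by
    intro a ha
    rcases lt_or_eq_of_le (hle a) with h | h
    · exact Or.inr ⟨ha, h⟩
    · exact Or.inl ⟨ha, h⟩
  have hdisj : ∀ a, a ∈ W → a ∈ U → False := fun a hw hu => absurd hw.2 (ne_of_lt hu.2)
  -- the invariability map f
  have hf : ∀ a : Fin n, ∃ j : Fin n, a ∈ Supp x →
      j ≠ a ∧ Arc A x a j ∧ ∀ k, Arc A x k j → k = a := by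
    intro a
    by_cases ha : a ∈ Supp x
    · obtain ⟨-, j, hj⟩ := hinv a ha
      exact ⟨j, fun _ => hj⟩
    · exact ⟨a, fun h => absurd h ha⟩
  choose f hfne hfarc hfuniq using hf
  have hfS : ∀ a ∈ Supp x, f a ∈ Supp x := fun a ha => (hfarc a ha).2.1
  -- f is injective on Supp x
  have hinj : Set.InjOn f (Supp x) := by
    intro a ha b hb hab
    exact hfuniq b hb a (hab ▸ hfarc a ha)
  -- key step : f maps U into U
  have hfU : Set.MapsTo f U U := by
    intro a ha
    refine ⟨hfS a ha.1, lt_of_le_of_ne (hle (f a)) ?_⟩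
    intro heq
    have harc := hfarc a ha.1
    have hbd : ∀ k, A (f a) k + x k ≤ x (f a) := harc.2.2.2
    have hxfa : x (f a) ≠ ⊥ := harc.2.1
    have h1 : x (f a) ≤ mpApply A x' (f a) := heq ▸ hx'S.1 (f a)
    rw [mpApply, Finset.le_sup_iff (by exact hxfa.bot_lt)] at h1
    obtain ⟨k, -, hk⟩ := h1
    have h2 : A (f a) k + x' k ≤ A (f a) k + x k := add_le_add le_rfl (hle k)
    have h3 : A (f a) k + x' k = x (f a) := le_antisymm (h2.trans (hbd k)) hk
    have h4 : A (f a) k + x k = x (f a) := le_antisymm (hbd k) (h3 ▸ h2)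
    have hAk : A (f a) k ≠ ⊥ := by
      intro hh; rw [hh] at h4; simp at h4; exact hxfa h4.symm
    have hxk : x k ≠ ⊥ := by
      intro hh; rw [hh] at h4; simp at h4; exact hxfa h4.symm
    have hx'k : x' k = x k := WithBot.add_left_cancel hAk (h3.trans h4.symm)
    have hka : k = a := hfuniq a ha.1 k ⟨hxk, hxfa, h4, hbd⟩
    exact absurd (hka ▸ hx'k) (ne_of_lt ha.2)
  -- by finiteness, f is a bijection of Supp x and of U
  have hbijS : Set.BijOn f (Supp x) (Supp x) :=
    ((Set.toFinite (Supp x)).injOn_iff_bijOn_of_mapsTo hfS).mp hinj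
  have hbijU : Set.BijOn f U U :=
    ((Set.toFinite U).injOn_iff_bijOn_of_mapsTo hfU).mp (hinj.mono hUsub)
  -- hence f maps W into W
  have hfW : Set.MapsTo f W W := by
    intro a ha
    rcases hpart (f a) (hfS a ha.1) with h | h
    · exact h
    · obtain ⟨a', ha', hfa'⟩ := hbijU.surjOn h
      exact absurd (hinj (hUsub ha') ha.1 hfa') (fun hh => hdisj a ha (hh ▸ ha'))
  -- W is isolated
  have hisoW : IsolatedSet A x W := by
    refine ⟨hWsub, fun a b harc => ?_⟩
    have hbS : b ∈ Supp x := harc.2.1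
    obtain ⟨c, hc, hcb⟩ := hbijS.surjOn hbS
    have hca : a = c := by
      have := hfuniq c hc a (hcb ▸ harc)
      exact this
    subst hca; subst hcb
    constructor
    · exact fun h => hfW h
    · intro h
      rcases hpart a hc with h' | h'
      · exact h'
      · exact absurd h (fun hh => hdisj (f a) hh (hfU h'))
  -- W is nonempty and proper
  have hWne : W.Nonempty := ⟨i, hi, hxi⟩
  have hWss : W ⊂ Supp x := by
    refine ⟨hWsub, fun hss => ?_⟩
    apply hne
    funext a
    by_cases ha : a ∈ Supp x
    · exact (hss ha).2
    · have : x a = ⊥ := not_not.mp ha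
      exact le_antisymm (this ▸ hle a) (this ▸ bot_le)
  exact hiso W hWne hWss hisoW
end
end

section
/- Let x ∈ 𝒳. Then the following are equivalent: (a) no nonempty proper subset of Supp(x) is isolated in the tangent digraph 𝒟_x and every node of Supp(x) is invariable in 𝒟_x; (b) there exist s ≥ 2 and an enumeration i₁,…,i_s of all the (pairwise distinct) nodes of Supp(x) such that the arcs of 𝒟_x are exactly (i₁,i₂), (i₂,i₃), …, (i_{s−1},i_s), (i_s,i₁), i.e., 𝒟_x is a single elementary cycle through all nodes of Supp(x). -/
open scoped Classical

noncomputable section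

/-- (no nonempty proper isolated subset and all nodes invariable) iff
`𝒟ₓ` is a single elementary cycle through all the `s ≥ 2` nodes of `Supp x`. -/
theorem stmt10 {n : ℕ} (A : Matrix (Fin n) (Fin n) (WithBot ℝ)) (x : Fin n → WithBot ℝ)
    (hx : x ∈ SuperEig A) :
    ((∀ W : Set (Fin n), W.Nonempty → W ⊂ Supp x → ¬ IsolatedSet A x W) ∧
        ∀ i ∈ Supp x, Invariable A x i) ↔
      (∃ s : ℕ, 2 ≤ s ∧ ∃ e : ZMod s → Fin n, Function.Injective e ∧
        Set.range e = Supp x ∧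
        ∀ a b, Arc A x a b ↔ ∃ t : ZMod s, e t = a ∧ e (t + 1) = b) := by
  have hxne : x ≠ fun _ => (⊥ : WithBot ℝ) := hx.2
  show ((∀ W : Set (Fin n), W.Nonempty → W ⊂ Supp x → ¬ (W ⊆ Supp x ∧ ∀ a b, Arc A x a b → (a ∈ W ↔ b ∈ W))) ∧
      ∀ i ∈ Supp x, x i ≠ ⊥ ∧ ∃ j, j ≠ i ∧ Arc A x i j ∧ ∀ k, Arc A x k j → k = i) ↔ _
  constructor
  · rintro ⟨hiso, hinv⟩
    set S : Set (Fin n) := Supp x with hS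
    -- choose the invariable witness
    have hch : ∀ i ∈ S, ∃ j, j ≠ i ∧ Arc A x i j ∧ ∀ k, Arc A x k j → k = i := by
      intro i hi; exact (hinv i hi).2
    classical
    set g : Fin n → Fin n := fun i => if h : i ∈ S then (hch i h).choose else i with hgdef
    have hg : ∀ i ∈ S, g i ≠ i ∧ Arc A x i (g i) ∧ ∀ k, Arc A x k (g i) → k = i := by
      intro i hi
      have := (hch i hi).choose_spec
      simpa [hgdef, dif_pos hi] using this
    have hgS : ∀ i ∈ S, g i ∈ S := fun i hi => ((hg i hi).2.1).2.1
    have hginj : ∀ i ∈ S, ∀ i' ∈ S, g i = g i' → i = i' := by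
      intro i hi i' hi' h
      exact ((hg i' hi').2.2 i (h ▸ (hg i hi).2.1)).symm ▸ rfl
    -- surjectivity of g on S
    have hSfin : S.Finite := Set.toFinite S
    have hsurj : Set.SurjOn g S S := by
      have hm : Set.MapsTo g S S := fun i hi => hgS i hi
      have hinj : Set.InjOn g S := fun a ha b hb h => hginj a ha b hb h
      exact ((hSfin.injOn_iff_bijOn_of_mapsTo hm).mp hinj).surjOn
    -- arc characterization
    have harc : ∀ a b, Arc A x a b ↔ (a ∈ S ∧ b = g a) := by
      intro a b
      constructor
      · intro h
        have ha : a ∈ S := h.1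
        have hb : b ∈ S := h.2.1
        obtain ⟨i, hi, hgi⟩ := hsurj hb
        have : a = i := (hg i hi).2.2 a (hgi ▸ h)
        exact ⟨ha, by rw [this, hgi]⟩
      · rintro ⟨ha, rfl⟩; exact (hg a ha).2.1
    -- base point
    obtain ⟨i₀, hi₀⟩ : ∃ i, x i ≠ ⊥ := Function.ne_iff.mp hxne
    have hi₀S : i₀ ∈ S := hi₀
    set E : ℕ → Fin n := fun t => g^[t] i₀ with hEdef
    have hES : ∀ t, E t ∈ S := by
      intro t; induction t with
      | zero => exact hi₀S
      | succ t ih => simpa [hEdef, Function.iterate_succ_apply'] using hgS _ ih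
    have hEsucc : ∀ t, E (t + 1) = g (E t) := by
      intro t; simp [hEdef, Function.iterate_succ_apply']
    have hcanc1 : ∀ t u, E (t + 1) = E (u + 1) → E t = E u := by
      intro t u h
      rw [hEsucc, hEsucc] at h
      exact hginj _ (hES t) _ (hES u) h
    have hcanc : ∀ d t u, E (t + d) = E (u + d) → E t = E u := by
      intro d
      induction d with
      | zero => intro t u h; simpa using h
      | succ d ih =>
        intro t u h
        apply ih
        apply hcanc1
        convert h using 2 <;> omega
    -- find a period
    obtain ⟨a, b, hab, hEab⟩ := Finite.exists_ne_map_eq_of_infinite E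
    have hpex : ∃ d, 0 < d ∧ E d = i₀ := by
      rcases Nat.lt_or_ge a b with hlt | hge
      · refine ⟨b - a, by omega, ?_⟩
        have : E (0 + (b - a) + a) = E (0 + a) := by
          have h1 : 0 + (b - a) + a = b := by omega
          have h2 : 0 + a = a := by omega
          rw [h1, h2]; exact hEab.symm
        have := hcanc a _ _ this
        simpa [show E 0 = i₀ from rfl] using this
      · have hlt : b < a := by omega
        refine ⟨a - b, by omega, ?_⟩
        have : E (0 + (a - b) + b) = E (0 + b) := by
          have h1 : 0 + (a - b) + b = a := by omega
          have h2 : 0 + b = b := by omega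
          rw [h1, h2]; exact hEab
        have := hcanc b _ _ this
        simpa [show E 0 = i₀ from rfl] using this
    set s : ℕ := Nat.find hpex with hsdef
    obtain ⟨hspos, hEs⟩ : 0 < s ∧ E s = i₀ := Nat.find_spec hpex
    have hmin : ∀ m, 0 < m → m < s → E m ≠ i₀ := by
      intro m hm hms hc
      exact Nat.find_min hpex hms ⟨hm, hc⟩
    have hs2 : 2 ≤ s := by
      rcases Nat.lt_or_ge s 2 with h | h
      · exfalso
        interval_cases s
        · have : E 1 = i₀ := hEs
          rw [hEsucc 0] at this
          exact (hg i₀ hi₀S).1 this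
      · exact h
    -- periodicity
    have hper : ∀ t, E (t + s) = E t := by
      intro t
      have h1 : E (t + s) = g^[t] (g^[s] i₀) := Function.iterate_add_apply g t s i₀
      have h2 : g^[s] i₀ = i₀ := hEs
      rw [h1, h2]
    have hperq : ∀ q t, E (t + s * q) = E t := by
      intro q
      induction q with
      | zero => simp
      | succ q ih =>
        intro t
        have h3 : t + s * (q + 1) = (t + s) + s * q := by ring
        rw [h3, ih, hper]
    have hmod : ∀ t, E t = E (t % s) := by
      intro t
      conv_lhs => rw [← Nat.mod_add_div t s]
      rw [hperq]
    -- the orbit is all of S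
    set W : Set (Fin n) := Set.range E with hWdef
    have hWS : W ⊆ S := by rintro _ ⟨t, rfl⟩; exact hES t
    have hWiso : W ⊆ S ∧ ∀ a b, Arc A x a b → (a ∈ W ↔ b ∈ W) := by
      refine ⟨hWS, ?_⟩
      intro a b hab
      obtain ⟨haS, rfl⟩ := (harc a b).mp hab
      constructor
      · rintro ⟨t, rfl⟩; exact ⟨t + 1, hEsucc t⟩
      · rintro ⟨t, ht⟩
        set t' : ℕ := if t % s = 0 then s else t % s with ht'def
        have ht'pos : 0 < t' := by
          rw [ht'def]; split
          · exact hspos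
          · omega
        have hbt' : E t' = g a := by
          rw [← ht]
          rw [ht'def]; split
          · next h0 => rw [hmod t, h0]; exact hEs
          · exact (hmod t).symm
        have : E (t' - 1 + 1) = g a := by rw [Nat.sub_add_cancel ht'pos]; exact hbt'
        rw [hEsucc] at this
        have := hginj _ (hES (t' - 1)) a haS this
        exact ⟨t' - 1, this⟩
    have hWne : W.Nonempty := ⟨i₀, 0, rfl⟩
    have hWeq : W = S := by
      by_contra hne
      exact hiso W hWne (ssubset_of_subset_of_ne hWS hne) hWiso
    -- build the enumeration
    haveI : NeZero s := ⟨by omega⟩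
    haveI : Fact (1 < s) := ⟨by omega⟩
    refine ⟨s, hs2, fun t => E t.val, ?_, ?_, ?_⟩
    · intro t u h
      apply ZMod.val_injective s
      have hE0 : E 0 = i₀ := rfl
      rcases le_or_gt t.val u.val with hle | hlt
      · by_contra hne
        have hd : u.val - t.val < s := lt_of_le_of_lt (Nat.sub_le _ _) (ZMod.val_lt u)
        have h2 : E (0 + (u.val - t.val) + t.val) = E (0 + t.val) := by
          have h1 : 0 + (u.val - t.val) + t.val = u.val := by omega
          have h1' : 0 + t.val = t.val := by omega
          rw [h1, h1']; exact h.symm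
        have h3 := hcanc t.val _ _ h2
        rw [hE0, Nat.zero_add] at h3
        exact hmin _ (by omega) hd h3
      · by_contra hne
        have hd : t.val - u.val < s := lt_of_le_of_lt (Nat.sub_le _ _) (ZMod.val_lt t)
        have h2 : E (0 + (t.val - u.val) + u.val) = E (0 + u.val) := by
          have h1 : 0 + (t.val - u.val) + u.val = t.val := by omega
          have h1' : 0 + u.val = u.val := by omega
          rw [h1, h1']; exact h
        have h3 := hcanc u.val _ _ h2
        rw [hE0, Nat.zero_add] at h3
        exact hmin _ (by omega) hd h3
    · apply Set.Subset.antisymm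
      · rintro _ ⟨t, rfl⟩; exact hES t.val
      · intro i hi
        have : i ∈ W := hWeq ▸ hi
        obtain ⟨t, rfl⟩ := this
        refine ⟨(↑(t % s) : ZMod s), ?_⟩
        show E ((↑(t % s) : ZMod s)).val = E t
        rw [ZMod.val_cast_of_lt (Nat.mod_lt t hspos)]
        exact (hmod t).symm
    · intro a b
      rw [harc]
      constructor
      · rintro ⟨haS, rfl⟩
        have haW : a ∈ W := hWeq ▸ haS
        obtain ⟨t, rfl⟩ := haW
        refine ⟨(↑(t % s) : ZMod s), ?_, ?_⟩
        · show E ((↑(t % s) : ZMod s)).val = E t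
          rw [ZMod.val_cast_of_lt (Nat.mod_lt t hspos)]
          exact (hmod t).symm
        · show E (((↑(t % s) : ZMod s)) + 1).val = g (E t)
          have h1 : ((↑(t % s) : ZMod s) + 1).val = (t % s + 1) % s := by
            rw [ZMod.val_add, ZMod.val_one, ZMod.val_cast_of_lt (Nat.mod_lt t hspos)]
          rw [h1, ← hmod (t % s + 1), hEsucc, ← hmod t]
      · rintro ⟨t, rfl, rfl⟩
        refine ⟨hES t.val, ?_⟩
        show E (t + 1).val = g (E t.val)
        have h1 : (t + 1).val = (t.val + 1) % s := by
          rw [ZMod.val_add, ZMod.val_one]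
        rw [h1, ← hmod, hEsucc]
  · rintro ⟨s, hs2, e, hinj, hrange, harc⟩
    haveI : NeZero s := ⟨by omega⟩
    haveI : Fact (1 < s) := ⟨by omega⟩
    have hone : (1 : ZMod s) ≠ 0 := by
      intro h
      have hd : (s : ℕ) ∣ 1 := by
        have := (ZMod.natCast_eq_zero_iff 1 s).mp (by exact_mod_cast h)
        exact this
      have := Nat.le_of_dvd one_pos hd
      omega
    constructor
    · -- no isolated proper nonempty subset
      intro W hWne hWss ⟨hWsub, hWiso⟩
      obtain ⟨w, hw⟩ := hWne
      obtain ⟨v, hvS, hvW⟩ : ∃ v, v ∈ {i | x i ≠ ⊥} ∧ v ∉ W := Set.exists_of_ssubset hWss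
      obtain ⟨t₀, rfl⟩ : ∃ t, e t = w := by
        have : w ∈ Set.range e := hrange ▸ hWsub hw
        exact this
      obtain ⟨t₁, rfl⟩ : ∃ t, e t = v := by
        have : v ∈ Set.range e := hrange ▸ hvS
        exact this
      have hstep : ∀ t : ZMod s, e t ∈ W ↔ e (t + 1) ∈ W := by
        intro t
        exact hWiso _ _ ((harc (e t) (e (t + 1))).mpr ⟨t, rfl, rfl⟩)
      have hall : ∀ m : ℕ, e (t₀ + (m : ZMod s)) ∈ W := by
        intro m
        induction m with
        | zero => simpa using hw
        | succ m ih =>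
          have : (((m : ℕ) + 1 : ℕ) : ZMod s) = (m : ZMod s) + 1 := by push_cast; ring
          rw [this, ← add_assoc]
          exact (hstep _).mp ih
      have := hall (t₁ - t₀).val
      rw [ZMod.natCast_val, ZMod.cast_id] at this
      simp only [add_sub_cancel] at this
      exact hvW this
    · -- every node invariable
      intro i hi
      obtain ⟨t, rfl⟩ : ∃ t, e t = i := by
        have : i ∈ Set.range e := hrange ▸ hi
        exact this
      refine ⟨hi, e (t + 1), ?_, (harc _ _).mpr ⟨t, rfl, rfl⟩, ?_⟩
      · intro h
        have := hinj h
        have h1 : (1 : ZMod s) = 0 := by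
          have := congrArg (· - t) this
          simpa using this
        exact hone h1
      · intro k hk
        obtain ⟨u, hu1, hu2⟩ := (harc k (e (t + 1))).mp hk
        have : u + 1 = t + 1 := hinj hu2
        have : u = t := by
          have := congrArg (· - 1) this
          simpa using this
        rw [← hu1, this]
end
end

section
/- Let x ∈ 𝒳. If no nonempty proper subset of Supp(x) is isolated in the tangent digraph 𝒟_x and every node of Supp(x) is invariable in 𝒟_x, then x is an extremal in 𝒳'. -/
open scoped Classical

noncomputable section

/-- no nonempty proper isolated subset and all nodes invariable imply that
`x` is an extremal in `𝒳'`. -/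
theorem stmt11 {n : ℕ} (A : Matrix (Fin n) (Fin n) (WithBot ℝ)) (x : Fin n → WithBot ℝ)
    (hx : x ∈ SuperEig A)
    (hiso : ∀ W : Set (Fin n), W.Nonempty → W ⊂ Supp x → ¬ IsolatedSet A x W)
    (hinv : ∀ i ∈ Supp x, Invariable A x i) :
    IsExtremal A x := by
  classical
  refine ⟨Or.inl hx, ?_⟩
  intro y hy z hz hxyz
  -- choose a witness function `J`
  have hinv' : ∀ i : Fin n, ∃ j, x i ≠ ⊥ →
      (j ≠ i ∧ Arc A x i j ∧ ∀ k, Arc A x k j → k = i) := by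
    intro i
    by_cases h : x i ≠ ⊥
    · obtain ⟨-, j, hj⟩ := hinv i h
      exact ⟨j, fun _ => hj⟩
    · exact ⟨i, fun h' => absurd h' h⟩
  choose J hJ using hinv'
  have harcJ : ∀ i, x i ≠ ⊥ → Arc A x i (J i) := fun i h => (hJ i h).2.1
  have hxJ : ∀ i, x i ≠ ⊥ → x (J i) ≠ ⊥ := fun i h => (harcJ i h).2.1
  have huniq : ∀ i, x i ≠ ⊥ → ∀ k, Arc A x k (J i) → k = i := fun i h => (hJ i h).2.2
  have horb : ∀ (t : ℕ) (i : Fin n), x i ≠ ⊥ → x (J^[t] i) ≠ ⊥ := by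
    intro t
    induction t with
    | zero => intro i h; simpa using h
    | succ m ih =>
      intro i h
      rw [Function.iterate_succ_apply]
      exact ih (J i) (hxJ i h)
  -- Lemma B : pull equality with `x` back along witness arcs
  have lemB : ∀ w : Fin n → WithBot ℝ, (∀ m, w m ≤ mpApply A w m) → (∀ m, w m ≤ x m) →
      ∀ i, x i ≠ ⊥ → w (J i) = x (J i) → w i = x i := by
    intro w hw hwx i hi hwJ
    obtain ⟨hxi, hxv, heq, hsat⟩ := harcJ i hi
    have h1 : x (J i) ≤ Finset.univ.sup fun k => A (J i) k + w k := by
      calc x (J i) = w (J i) := hwJ.symm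
        _ ≤ mpApply A w (J i) := hw (J i)
    obtain ⟨k, -, hk⟩ := (Finset.le_sup_iff (Ne.bot_lt hxv)).1 h1
    have hk2 : A (J i) k + w k ≤ A (J i) k + x k := add_le_add le_rfl (hwx k)
    have hk3 : A (J i) k + x k = x (J i) := le_antisymm (hsat k) (hk.trans hk2)
    have hxk : x k ≠ ⊥ := by
      intro h
      rw [h, WithBot.add_bot] at hk3
      exact hxv hk3.symm
    have hki : k = i := huniq i hi k ⟨hxk, hxv, hk3, hsat⟩
    rw [hki] at hk hk2 hk3
    have h4 : A (J i) i + w i = A (J i) i + x i :=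
      le_antisymm hk2 (by calc A (J i) i + x i = x (J i) := hk3
                            _ ≤ A (J i) i + w i := hk)
    have hA : A (J i) i ≠ ⊥ := by
      intro h
      rw [h, WithBot.bot_add] at hk3
      exact hxv hk3.symm
    exact WithBot.add_left_cancel hA h4
  -- every support node is `J`-periodic
  have hper : ∀ i, x i ≠ ⊥ → ∃ q, 1 ≤ q ∧ J^[q] i = i := by
    intro i hi
    obtain ⟨p, q, hpq, heq⟩ : ∃ p q : ℕ, p ≠ q ∧ J^[p] i = J^[q] i :=
      Finite.exists_ne_map_eq_of_infinite fun t : ℕ => J^[t] i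
    have key : ∀ p q : ℕ, p < q → J^[p] i = J^[q] i → ∃ r, 1 ≤ r ∧ J^[r] i = i := by
      intro p
      induction p with
      | zero =>
        intro q hq h0
        refine ⟨q, hq, ?_⟩
        simpa using h0.symm
      | succ m ih =>
        intro q hq h0
        have hq1 : m < q - 1 := by omega
        have hqq : q - 1 + 1 = q := by omega
        have hu : x (J^[m] i) ≠ ⊥ := horb m i hi
        have hu' : x (J^[q - 1] i) ≠ ⊥ := horb _ i hi
        have hiter : J^[q] i = J (J^[q - 1] i) := by
          conv_lhs => rw [← hqq]
          rw [Function.iterate_succ_apply']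
        have h0' : J (J^[q - 1] i) = J (J^[m] i) := by
          calc J (J^[q - 1] i) = J^[q] i := hiter.symm
            _ = J^[m + 1] i := h0.symm
            _ = J (J^[m] i) := Function.iterate_succ_apply' J m i
        have harc' : Arc A x (J^[q - 1] i) (J (J^[m] i)) := by
          rw [← h0']
          exact harcJ _ hu'
        have heq' := huniq (J^[m] i) hu _ harc'
        exact ih (q - 1) hq1 heq'.symm
    rcases Nat.lt_or_ge p q with h | h
    · exact key p q h heq
    · exact key q p (lt_of_le_of_ne h hpq.symm) heq.symm
  -- chained version of Lemma B
  have chain : ∀ w : Fin n → WithBot ℝ, (∀ m, w m ≤ mpApply A w m) → (∀ m, w m ≤ x m) →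
      ∀ (m : ℕ) (u : Fin n), x u ≠ ⊥ → w (J^[m] u) = x (J^[m] u) → w u = x u := by
    intro w hw hwx m
    induction m with
    | zero => intro u _ h; simpa using h
    | succ t ih =>
      intro u hu h
      rw [Function.iterate_succ_apply] at h
      exact lemB w hw hwx u hu (ih (J u) (hxJ u hu) h)
  -- push equality with `x` forward along witness arcs
  have fwd : ∀ w : Fin n → WithBot ℝ, (∀ m, w m ≤ mpApply A w m) → (∀ m, w m ≤ x m) →
      ∀ i, x i ≠ ⊥ → w i = x i → w (J i) = x (J i) := by
    intro w hw hwx i hi h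
    obtain ⟨q, hq1, hq⟩ := hper i hi
    have hpre : J^[q - 1] (J i) = i := by
      rw [← Function.iterate_succ_apply]
      have hqq : (q - 1).succ = q := by omega
      rw [hqq, hq]
    exact chain w hw hwx (q - 1) (J i) (hxJ i hi) (by rw [hpre]; exact h)
  -- every arc is a witness arc
  have harc_eq : ∀ a b, Arc A x a b → b = J a := by
    intro a b hab
    have hxa : x a ≠ ⊥ := hab.1
    have hxb : x b ≠ ⊥ := hab.2.1
    obtain ⟨q, hq1, hqb⟩ := hper b hxb
    have hub : J (J^[q - 1] b) = b := by
      have hqq : q - 1 + 1 = q := by omega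
      conv_rhs => rw [← hqb, ← hqq, Function.iterate_succ_apply']
    have ha' : a = J^[q - 1] b :=
      huniq (J^[q - 1] b) (horb _ b hxb) a (by rw [hub]; exact hab)
    rw [ha']
    exact hub.symm
  -- main argument
  have hxyz' : ∀ i, x i = y i ⊔ z i := fun i => congrFun hxyz i
  rcases (Set.mem_union _ _ _).1 hy with hy' | hy'
  swap
  · -- y = ⊥ vector, so x = z
    right
    have hyb : y = fun _ => (⊥ : WithBot ℝ) := Set.mem_singleton_iff.1 hy'
    funext i
    rw [hxyz' i, congrFun hyb i, bot_sup_eq]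
  rcases (Set.mem_union _ _ _).1 hz with hz' | hz'
  swap
  · -- z = ⊥ vector, so x = y
    left
    have hzb : z = fun _ => (⊥ : WithBot ℝ) := Set.mem_singleton_iff.1 hz'
    funext i
    rw [hxyz' i, congrFun hzb i, sup_bot_eq]
  obtain ⟨hy1, hy2⟩ := hy'
  obtain ⟨hz1, hz2⟩ := hz'
  have hylex : ∀ i, y i ≤ x i := fun i => le_trans le_sup_left (hxyz' i).ge
  have hzlex : ∀ i, z i ≤ x i := fun i => le_trans le_sup_right (hxyz' i).ge
  set S : Set (Fin n) := {i | x i ≠ ⊥ ∧ y i = x i} with hSdef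
  by_cases hSne : S.Nonempty
  · left
    have hSsub : S ⊆ Supp x := fun i hi => hi.1
    have hSiso : IsolatedSet A x S := by
      refine ⟨hSsub, ?_⟩
      intro a b hab
      have hxa : x a ≠ ⊥ := hab.1
      have hxb : x b ≠ ⊥ := hab.2.1
      have hb : b = J a := harc_eq a b hab
      subst hb
      constructor
      · rintro ⟨-, hya⟩
        exact ⟨hxb, fwd y hy1 hylex a hxa hya⟩
      · rintro ⟨-, hyb⟩
        exact ⟨hxa, lemB y hy1 hylex a hxa hyb⟩
    by_cases hSeq : S = Supp x
    · funext i
      by_cases hxi : x i = ⊥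
      · have hy0 : y i = ⊥ := le_bot_iff.1 (by rw [← hxi]; exact hylex i)
        rw [hxi, hy0]
      · have hiS : i ∈ S := by rw [hSeq]; exact hxi
        exact hiS.2.symm
    · exact absurd hSiso (hiso S hSne (Set.ssubset_iff_subset_ne.mpr ⟨hSsub, hSeq⟩))
  · right
    have hSempty : ∀ i, x i ≠ ⊥ → y i ≠ x i := fun i hxi hyi => hSne ⟨i, hxi, hyi⟩
    funext i
    by_cases hxi : x i = ⊥
    · have hz0 : z i = ⊥ := le_bot_iff.1 (by rw [← hxi]; exact hzlex i)
      rw [hxi, hz0]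
    · have hy' : y i < x i := lt_of_le_of_ne (hylex i) (hSempty i hxi)
      rcases le_or_gt (x i) (z i) with h | h
      · exact le_antisymm h (hzlex i)
      · exact absurd (hxyz' i) (ne_of_gt (sup_lt_iff.mpr ⟨hy', h⟩))
end
end

section
/- Let x ∈ 𝒳 and suppose: (i) no nonempty proper subset of Supp(x) is isolated in the tangent digraph 𝒟_x; (ii) 𝒟_x does not contain two node-disjoint cycles; (iii) there is exactly one variable node i in 𝒟_x and all other nodes of Supp(x) are invariable. Then x'_i < x_i for every x' ∈ 𝒳^{≤x}. -/
open scoped Classical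

noncomputable section

/-- under conditions (i)-(iii), any `x' ∈ 𝒳^{≤x}` satisfies `x'ᵢ < xᵢ`
at the unique variable node `i`. -/
theorem stmt12 {n : ℕ} (A : Matrix (Fin n) (Fin n) (WithBot ℝ)) (x : Fin n → WithBot ℝ)
    (hx : x ∈ SuperEig A)
    (hiso : ∀ W : Set (Fin n), W.Nonempty → W ⊂ Supp x → ¬ IsolatedSet A x W)
    (hcyc : ∀ (k₁ k₂ : ℕ) (c₁ c₂ : ℕ → Fin n), IsCycle A x k₁ c₁ → IsCycle A x k₂ c₂ →
      ¬ Disjoint (c₁ '' Set.Iio k₁) (c₂ '' Set.Iio k₂))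
    (i : Fin n) (hvar : VarNode A x i) (huniq : ∀ j, VarNode A x j → j = i)
    (hinv : ∀ j ∈ Supp x, j ≠ i → Invariable A x j) :
    ∀ x' ∈ BelowSet A x, x' i < x i := by
  haveI : Nonempty (Fin n) := ⟨i⟩
  intro x' hx'
  obtain ⟨hx'E, hx'le, hx'ne⟩ := hx'
  by_contra hcon
  have hxi_ne : x i ≠ ⊥ := by rcases hvar with h | h <;> exact h.1
  have hxi : x' i = x i := ((hx'le i).lt_or_eq).resolve_left hcon
  -- the sets S and T
  set S : Set (Fin n) := {j | x j ≠ ⊥ ∧ x' j = x j} with hSdef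
  set T : Set (Fin n) := {j | x j ≠ ⊥ ∧ x' j ≠ x j} with hTdef
  have hiS : i ∈ S := ⟨hxi_ne, hxi⟩
  have hST : ∀ j, j ∈ S → j ∈ T → False := fun j hj hj' => hj'.2 hj.2
  have hsupp : ∀ j, x j ≠ ⊥ → j ∈ S ∨ j ∈ T := by
    intro j hj
    by_cases h : x' j = x j
    · exact Or.inl ⟨hj, h⟩
    · exact Or.inr ⟨hj, h⟩
  have hTne : T.Nonempty := by
    by_contra hT
    apply hx'ne
    funext j
    by_cases hj : x j = ⊥
    · exact le_antisymm (hj ▸ hx'le j) (hj ▸ bot_le)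
    · rcases hsupp j hj with h | h
      · exact h.2
      · exact absurd ⟨j, h⟩ hT
  obtain ⟨t₀, ht₀⟩ := hTne
  -- key saturation claim
  have key : ∀ b, b ∈ S → (∀ k, A b k + x k ≤ x b) →
      ∃ a, a ∈ S ∧ Arc A x a b := by
    intro b hb hsat
    obtain ⟨a, -, ha⟩ := Finset.exists_mem_eq_sup Finset.univ Finset.univ_nonempty
      (fun j => A b j + x' j)
    have h1 : x b ≤ A b a + x' a := by
      calc x b = x' b := hb.2.symm
        _ ≤ Finset.univ.sup (fun j => A b j + x' j) := hx'E.1 b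
        _ = A b a + x' a := ha
    have h2 : A b a + x' a ≤ A b a + x a := add_le_add le_rfl (hx'le a)
    have e2 : A b a + x a = x b := le_antisymm (hsat a) (h1.trans h2)
    have e1 : A b a + x' a = x b := le_antisymm (h2.trans (hsat a)) h1
    have hAba : A b a ≠ ⊥ := by
      intro h; rw [h, WithBot.bot_add] at e2; exact hb.1 e2.symm
    have hxa : x a ≠ ⊥ := by
      intro h; rw [h, WithBot.add_bot] at e2; exact hb.1 e2.symm
    have hx'a : x' a = x a :=
      WithBot.add_left_cancel hAba (e1.trans e2.symm)
    exact ⟨a, ⟨hxa, hx'a⟩, hxa, hb.1, e2, hsat⟩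
  -- the invariability map σ
  have hinv' : ∀ j, ∃ j', x j ≠ ⊥ → j ≠ i →
      j' ≠ j ∧ Arc A x j j' ∧ ∀ k, Arc A x k j' → k = j := by
    intro j
    by_cases hj : x j ≠ ⊥ ∧ j ≠ i
    · obtain ⟨-, j', hj'⟩ := hinv j hj.1 hj.2
      exact ⟨j', fun _ _ => hj'⟩
    · exact ⟨j, fun h1 h2 => absurd ⟨h1, h2⟩ hj⟩
  choose σ hσ using hinv'
  have hTnei : ∀ j, j ∈ T → j ≠ i := by
    rintro j hj rfl; exact hj.2 hxi
  -- σ maps T to T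
  have hσT : ∀ j ∈ T, σ j ∈ T := by
    intro j hj
    have hj' := hσ j hj.1 (hTnei j hj)
    have hsupp' : x (σ j) ≠ ⊥ := hj'.2.1.2.1
    rcases hsupp (σ j) hsupp' with h | h
    · obtain ⟨a, haS, harc⟩ := key (σ j) h hj'.2.1.2.2.2
      have haj : a = j := hj'.2.2 a harc
      exact absurd (haj ▸ haS) (fun hc => hST j hc hj)
    · exact h
  -- σ is injective (via uniqueness of incoming arcs)
  have hσinj : ∀ u v, x u ≠ ⊥ → u ≠ i → x v ≠ ⊥ → v ≠ i → σ u = σ v → u = v := by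
    intro u v hu hui hv hvi huv
    have h1 := hσ u hu hui
    have h2 := hσ v hv hvi
    exact ((h1.2.2 v (huv ▸ h2.2.1))).symm
  -- σ restricted to T is surjective onto T
  have hσTsurj : ∀ b ∈ T, ∃ t ∈ T, σ t = b := by
    have hfin : T.Finite := Set.toFinite T
    have hmaps : Set.MapsTo σ T T := fun j hj => hσT j hj
    have hinj : Set.InjOn σ T := fun u hu v hv h =>
      hσinj u v hu.1 (hTnei u hu) hv.1 (hTnei v hv) h
    have hbij := (Set.Finite.injOn_iff_bijOn_of_mapsTo hfin hmaps).mp hinj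
    intro b hb
    obtain ⟨t, ht, h⟩ := hbij.surjOn hb
    exact ⟨t, ht, h⟩
  -- every arc into T comes from T
  have hTin : ∀ u b, b ∈ T → Arc A x u b → u ∈ T := by
    intro u b hb harc
    obtain ⟨t, ht, rfl⟩ := hσTsurj b hb
    have hut := (hσ t ht.1 (hTnei t ht)).2.2 u harc
    exact hut ▸ ht
  -- σ maps S \ {i} to S
  have hσS : ∀ j ∈ S, j ≠ i → σ j ∈ S := by
    intro j hj hji
    have hj' := hσ j hj.1 hji
    have hsupp' : x (σ j) ≠ ⊥ := hj'.2.1.2.1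
    rcases hsupp (σ j) hsupp' with h | h
    · exact h
    · exact absurd (hTin j (σ j) h hj'.2.1) (fun hc => hST j hj hc)
  -- S is not isolated: there is a crossing arc, necessarily from T into S
  have hSsubset : S ⊆ Supp x := fun j hj => hj.1
  have hSss : S ⊂ Supp x := by
    refine ⟨hSsubset, fun hcontra => ?_⟩
    exact hST t₀ (hcontra ht₀.1) ht₀
  have hniso := hiso S ⟨i, hiS⟩ hSss
  rw [IsolatedSet] at hniso
  push_neg at hniso
  obtain ⟨a₀, b₀, harc₀, hiff₀⟩ := hniso hSsubset
  have ha₀b₀ : a₀ ∈ T ∧ b₀ ∈ S := by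
    rcases hiff₀ with ⟨haS', hbnS⟩ | ⟨hanS, hbS⟩
    · have hbT : b₀ ∈ T := (hsupp b₀ harc₀.2.1).resolve_left hbnS
      exact absurd (hTin a₀ b₀ hbT harc₀) (fun hc => hST a₀ haS' hc)
    · exact ⟨(hsupp a₀ harc₀.1).resolve_left hanS, hbS⟩
  obtain ⟨ha₀, hb₀S⟩ := ha₀b₀
  -- b₀ is not in the σ-image of S \ {i}
  have hb₀notim : ∀ s ∈ S, s ≠ i → σ s ≠ b₀ := by
    intro s hs hsi hcontra
    have hs' := (hσ s hs.1 hsi).2.2 a₀ (hcontra ▸ harc₀)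
    exact hST s hs (hs' ▸ ha₀)
  -- a predecessor of b₀ inside S
  obtain ⟨a, haS, harcab⟩ := key b₀ hb₀S harc₀.2.2.2
  -- the orbit of t₀ stays in T
  have horbT : ∀ t : ℕ, σ^[t] t₀ ∈ T := by
    intro t
    induction t with
    | zero => exact ht₀
    | succ t ih => rw [Function.iterate_succ_apply']; exact hσT _ ih
  -- helper 1 : a σ-orbit confined to a set W and avoiding i yields a cycle in W
  have helper1 : ∀ (W : Set (Fin n)), (∀ u ∈ W, x u ≠ ⊥) → ∀ (a' : Fin n),
      (∀ t : ℕ, σ^[t] a' ∈ W) → (∀ t : ℕ, σ^[t] a' ≠ i) →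
      ∃ p c, IsCycle A x p c ∧ ∀ s : ℕ, c s ∈ W := by
    intro W hW a' horb hne
    have hrep : ∃ k m : ℕ, k < m ∧ σ^[k] a' = σ^[m] a' := by
      obtain ⟨k, m, hkm, he⟩ := Finite.exists_ne_map_eq_of_infinite (fun t : ℕ => σ^[t] a')
      rcases lt_or_gt_of_ne hkm with h | h
      · exact ⟨k, m, h, he⟩
      · exact ⟨m, k, h, he.symm⟩
    obtain ⟨k, m, hkm, he⟩ := hrep
    have hp1 : 1 ≤ m - k := by omega
    refine ⟨m - k, fun s => σ^[k + s % (m - k)] a', ⟨hp1, ?_⟩, fun s => horb _⟩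
    intro t ht
    have htp : t % (m - k) = t := Nat.mod_eq_of_lt ht
    have htarget : σ^[k + (t + 1) % (m - k)] a' = σ (σ^[k + t] a') := by
      rw [← Function.iterate_succ_apply' σ (k + t) a']
      rcases eq_or_lt_of_le (Nat.succ_le_of_lt ht) with h | h
      · have h' : t + 1 = m - k := h
        have h0 : (t + 1) % (m - k) = 0 := by rw [h']; exact Nat.mod_self _
        have hmeq : k + t + 1 = m := by omega
        rw [h0, Nat.add_zero]
        show σ^[k] a' = σ^[k + t + 1] a'
        rw [hmeq, ← he]
      · have h1 : (t + 1) % (m - k) = t + 1 := Nat.mod_eq_of_lt h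
        rw [h1, ← Nat.add_assoc]
    have harc2 : Arc A x (σ^[k + t] a') (σ (σ^[k + t] a')) :=
      (hσ _ (hW _ (horb (k + t))) (hne (k + t))).2.1
    have hmm : (t + 1) % (m - k) % (m - k) = (t + 1) % (m - k) :=
      Nat.mod_mod_of_dvd _ dvd_rfl
    simp only [hmm, htp, htarget]
    exact harc2
  -- final contradiction once we have a cycle inside S
  have hcontr : ∀ p c, IsCycle A x p c → (∀ s : ℕ, c s ∈ S) → False := by
    intro p c hC hCS
    obtain ⟨p', c', hC', hC'T⟩ := helper1 T (fun u hu => hu.1) t₀ horbT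
      (fun t => hTnei _ (horbT t))
    refine hcyc p' p c' c hC' hC ?_
    rw [Set.disjoint_left]
    rintro z ⟨s, -, rfl⟩ hz2
    obtain ⟨s2, -, heq⟩ := hz2
    exact hST _ (heq ▸ hCS s2) (hC'T s)
  -- helper 2 : a σ-path in S from b₀ to a, plus the arc a → b₀, yields a cycle in S
  have helper2 : ∀ q : ℕ, (∀ t ≤ q, σ^[t] b₀ ∈ S) → (∀ t < q, σ^[t] b₀ ≠ i) →
      Arc A x (σ^[q] b₀) b₀ → False := by
    intro q horb hne harc'
    refine hcontr (q + 1) (fun s => σ^[s % (q + 1)] b₀) ⟨by omega, ?_⟩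
      (fun s => horb _ (Nat.le_of_lt_succ (Nat.mod_lt _ (by omega))))
    intro t ht
    have htp : t % (q + 1) = t := Nat.mod_eq_of_lt ht
    rcases Nat.lt_succ_iff_lt_or_eq.mp ht with h | h
    · have h1 : (t + 1) % (q + 1) = t + 1 := Nat.mod_eq_of_lt (by omega)
      have harc2 : Arc A x (σ^[t] b₀) (σ^[t + 1] b₀) := by
        rw [Function.iterate_succ_apply']
        exact (hσ _ (horb t (le_of_lt h)).1 (hne t h)).2.1
      have hmm : (t + 1) % (q + 1) % (q + 1) = (t + 1) % (q + 1) :=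
        Nat.mod_mod_of_dvd _ dvd_rfl
      simp only [hmm, htp, h1]
      exact harc2
    · subst h
      have h1 : (t + 1) % (t + 1) = 0 := Nat.mod_self _
      have hmm : (t + 1) % (t + 1) % (t + 1) = (t + 1) % (t + 1) :=
        Nat.mod_mod_of_dvd _ dvd_rfl
      simp only [hmm, htp, h1, Function.iterate_zero_apply]
      exact harc'
  -- main case analysis
  by_cases hHa : ∀ t : ℕ, σ^[t] a ≠ i
  · -- the orbit of a avoids i, hence stays in S : cycle in S
    have horbS : ∀ t : ℕ, σ^[t] a ∈ S := by
      intro t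
      induction t with
      | zero => exact haS
      | succ t ih => rw [Function.iterate_succ_apply']; exact hσS _ ih (hHa t)
    obtain ⟨p, c, hC, hCS⟩ := helper1 S (fun u hu => hu.1) a horbS hHa
    exact hcontr p c hC hCS
  · push_neg at hHa
    have hka : ∃ k, σ^[k] a = i := hHa
    set k := Nat.find hka with hkdef
    have hk : σ^[k] a = i := Nat.find_spec hka
    have hkmin : ∀ t, t < k → σ^[t] a ≠ i := fun t ht => Nat.find_min hka ht
    have horbSa : ∀ t, t ≤ k → σ^[t] a ∈ S := by
      intro t
      induction t with
      | zero => exact fun _ => haS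
      | succ t ih =>
        intro ht
        rw [Function.iterate_succ_apply']
        exact hσS _ (ih (by omega)) (hkmin t (by omega))
    by_cases hHb : ∀ t : ℕ, σ^[t] b₀ ≠ i
    · have horbS : ∀ t : ℕ, σ^[t] b₀ ∈ S := by
        intro t
        induction t with
        | zero => exact hb₀S
        | succ t ih => rw [Function.iterate_succ_apply']; exact hσS _ ih (hHb t)
      obtain ⟨p, c, hC, hCS⟩ := helper1 S (fun u hu => hu.1) b₀ horbS hHb
      exact hcontr p c hC hCS
    · push_neg at hHb
      have hmb : ∃ m, σ^[m] b₀ = i := hHb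
      set m := Nat.find hmb with hmdef
      have hm : σ^[m] b₀ = i := Nat.find_spec hmb
      have hmmin : ∀ t, t < m → σ^[t] b₀ ≠ i := fun t ht => Nat.find_min hmb ht
      have horbSb : ∀ t, t ≤ m → σ^[t] b₀ ∈ S := by
        intro t
        induction t with
        | zero => exact fun _ => hb₀S
        | succ t ih =>
          intro ht
          rw [Function.iterate_succ_apply']
          exact hσS _ (ih (by omega)) (hmmin t (by omega))
      -- merging of the two orbits backwards from i
      have merge : ∀ t, t ≤ k → t ≤ m → σ^[k - t] a = σ^[m - t] b₀ := by
        intro t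
        induction t with
        | zero => intro _ _; simpa using hk.trans hm.symm
        | succ t ih =>
          intro h1 h2
          have e := ih (by omega) (by omega)
          have ek : k - t = (k - (t + 1)) + 1 := by omega
          have em : m - t = (m - (t + 1)) + 1 := by omega
          rw [ek, Function.iterate_succ_apply', em, Function.iterate_succ_apply'] at e
          exact hσinj _ _ (horbSa _ (by omega)).1 (hkmin _ (by omega))
            (horbSb _ (by omega)).1 (hmmin _ (by omega)) e
      have hkm : k ≤ m := by
        by_contra h
        push_neg at h
        have e := merge m (le_of_lt h) le_rfl
        have ek : k - m = (k - m - 1) + 1 := by omega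
        rw [ek, Function.iterate_succ_apply'] at e
        simp only [Nat.sub_self, Function.iterate_zero_apply] at e
        exact hb₀notim _ (horbSa _ (by omega)) (hkmin _ (by omega)) e
      have ha_eq : σ^[m - k] b₀ = a := by
        have e := merge k le_rfl hkm
        simpa using e.symm
      exact helper2 (m - k) (fun t ht => horbSb t (by omega))
        (fun t ht => hmmin t (by omega)) (ha_eq ▸ harcab)
end
end

section
/- Let x ∈ 𝒳 and suppose: (i) no nonempty proper subset of Supp(x) is isolated in the tangent digraph 𝒟_x; (ii) 𝒟_x does not contain two node-disjoint cycles; (iii) there is exactly one variable node in 𝒟_x and all other nodes of Supp(x) are invariable. Then x is an extremal in 𝒳'. -/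
open scoped Classical

noncomputable section

section Aux

variable {n : ℕ} {A : Matrix (Fin n) (Fin n) (WithBot ℝ)} {x : Fin n → WithBot ℝ}
  {i0 : Fin n} {f : Fin n → Fin n}

/-- Iterates of `f` starting in the support stay in the support as long as they avoid `i0`. -/
lemma chain_ne_bot
    (hf : ∀ j, x j ≠ ⊥ → j ≠ i0 → Arc A x j (f j) ∧ ∀ k, Arc A x k (f j) → k = j) :
    ∀ (t : ℕ) (j : Fin n), x j ≠ ⊥ → (∀ s < t, f^[s] j ≠ i0) → x (f^[t] j) ≠ ⊥ := by
  intro t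
  induction t with
  | zero => intro j hj _; simpa using hj
  | succ t ih =>
    intro j hj hs
    rw [Function.iterate_succ_apply']
    have h1 : x (f^[t] j) ≠ ⊥ := ih j hj (fun s hst => hs s (hst.trans (Nat.lt_succ_self t)))
    have h2 : f^[t] j ≠ i0 := hs t (Nat.lt_succ_self t)
    exact ((hf _ h1 h2).1).2.1

lemma f_inj
    (hf : ∀ j, x j ≠ ⊥ → j ≠ i0 → Arc A x j (f j) ∧ ∀ k, Arc A x k (f j) → k = j)
    {j1 j2 : Fin n} (h1 : x j1 ≠ ⊥) (h1' : j1 ≠ i0) (h2 : x j2 ≠ ⊥) (h2' : j2 ≠ i0)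
    (heq : f j1 = f j2) : j1 = j2 :=
  (hf j2 h2 h2').2 j1 (heq ▸ (hf j1 h1 h1').1)

lemma cancel
    (hf : ∀ j, x j ≠ ⊥ → j ≠ i0 → Arc A x j (f j) ∧ ∀ k, Arc A x k (f j) → k = j) :
    ∀ (u s : ℕ) (b c : Fin n), x b ≠ ⊥ → x c ≠ ⊥ →
      (∀ t < s, f^[t] b ≠ i0) → (∀ t < u, f^[t] c ≠ i0) → u ≤ s → f^[s] b = f^[u] c →
      f^[s - u] b = c := by
  intro u
  induction u with
  | zero => intro s b c _ _ _ _ _ h; simpa using h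
  | succ u ih =>
    intro s b c hb hc hsb huc hus heq
    obtain ⟨s', rfl⟩ : ∃ s', s = s' + 1 := ⟨s - 1, by omega⟩
    rw [Function.iterate_succ_apply', Function.iterate_succ_apply'] at heq
    have d1 : x (f^[s'] b) ≠ ⊥ := chain_ne_bot hf s' b hb (fun t ht => hsb t (by omega))
    have d2 : f^[s'] b ≠ i0 := hsb s' (by omega)
    have d3 : x (f^[u] c) ≠ ⊥ := chain_ne_bot hf u c hc (fun t ht => huc t (by omega))
    have d4 : f^[u] c ≠ i0 := huc u (by omega)
    have heq2 : f^[s'] b = f^[u] c := f_inj hf d1 d2 d3 d4 heq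
    have := ih s' b c hb hc (fun t ht => hsb t (by omega)) (fun t ht => huc t (by omega))
      (by omega) heq2
    simpa [Nat.succ_sub_succ] using this

lemma periodic
    (hf : ∀ j, x j ≠ ⊥ → j ≠ i0 → Arc A x j (f j) ∧ ∀ k, Arc A x k (f j) → k = j)
    (b : Fin n) (hb : x b ≠ ⊥) (hni : ∀ t, f^[t] b ≠ i0) : ∃ k, 1 ≤ k ∧ f^[k] b = b := by
  obtain ⟨a, a', hne, heq⟩ := Finite.exists_ne_map_eq_of_infinite (fun t : ℕ => f^[t] b)
  rcases Nat.lt_or_ge a a' with h | h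
  · exact ⟨a' - a, by omega,
      cancel hf a a' b b hb hb (fun t _ => hni t) (fun t _ => hni t) (by omega) heq.symm⟩
  · have h' : a' < a := by omega
    exact ⟨a - a', by omega,
      cancel hf a' a b b hb hb (fun t _ => hni t) (fun t _ => hni t) (by omega) heq⟩

/-- A node that is `f`-periodic closes its `f`-chain into itself. -/
lemma close_arc
    (hf : ∀ j, x j ≠ ⊥ → j ≠ i0 → Arc A x j (f j) ∧ ∀ k, Arc A x k (f j) → k = j)
    (b : Fin n) (k : ℕ) (hk : 1 ≤ k) (hch : ∀ t, x (f^[t] b) ≠ ⊥) (hni : ∀ t, f^[t] b ≠ i0)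
    (hkp : f^[k] b = b) : Arc A x (f^[k - 1] b) b := by
  have harc := (hf (f^[k - 1] b) (hch _) (hni _)).1
  have hstep : f^[k - 1 + 1] b = f (f^[k - 1] b) := Function.iterate_succ_apply' f (k - 1) b
  have heq : f (f^[k - 1] b) = b := by
    rw [← hstep, show k - 1 + 1 = k from by omega, hkp]
  rwa [heq] at harc

/-- Build a cycle: a chain `b, f b, …, f^[e] b` along `f`-arcs closed by an arc
`f^[e] b → b`. -/
lemma mkPathCycle
    (hf : ∀ j, x j ≠ ⊥ → j ≠ i0 → Arc A x j (f j) ∧ ∀ k, Arc A x k (f j) → k = j)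
    (b : Fin n) (e : ℕ) (hdom : ∀ t < e, x (f^[t] b) ≠ ⊥ ∧ f^[t] b ≠ i0)
    (hclose : Arc A x (f^[e] b) b) : IsCycle A x (e + 1) (fun t => f^[t] b) := by
  refine ⟨by omega, fun t ht => ?_⟩
  show Arc A x (f^[t] b) (f^[(t + 1) % (e + 1)] b)
  rcases Nat.lt_or_ge (t + 1) (e + 1) with h | h
  · rw [Nat.mod_eq_of_lt h, Function.iterate_succ_apply']
    exact (hf _ (hdom t (by omega)).1 (hdom t (by omega)).2).1
  · have ht1 : t = e := by omega
    subst ht1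
    rw [Nat.mod_self]
    simpa using hclose

/-- The key analytic lemma: if `y` is a sub-solution below `x` which agrees with `x` at a
node `i` having an in-arc in `𝒟ₓ`, then it agrees with `x` at some in-neighbour of `i`. -/
lemma key {y : Fin n → WithBot ℝ}
    (hy : ∀ i, y i ≤ mpApply A y i) (hyx : ∀ i, y i ≤ x i)
    {i : Fin n} (hyi : y i = x i) (hxi : x i ≠ ⊥) {a : Fin n} (ha : Arc A x a i) :
    ∃ j, Arc A x j i ∧ y j = x j := by
  have hub : ∀ k, A i k + x k ≤ x i := ha.2.2.2
  have hne : (Finset.univ : Finset (Fin n)).Nonempty := ⟨i, Finset.mem_univ i⟩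
  obtain ⟨j, -, hsup⟩ := Finset.exists_mem_eq_sup Finset.univ hne (fun j => A i j + y j)
  have h1 : x i ≤ A i j + y j := by
    calc x i = y i := hyi.symm
    _ ≤ mpApply A y i := hy i
    _ = A i j + y j := hsup
  have h2 : A i j + y j ≤ A i j + x j := add_le_add_right (hyx j) _
  have h3 : A i j + x j ≤ x i := hub j
  have e1 : A i j + y j = x i := le_antisymm (h2.trans h3) h1
  have e2 : A i j + x j = x i := le_antisymm h3 (h1.trans h2)
  have hA : A i j ≠ ⊥ := by
    intro h; apply hxi; rw [← e1, h, WithBot.bot_add]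
  have hyj : y j ≠ ⊥ := by
    intro h; apply hxi; rw [← e1, h, WithBot.add_bot]
  have hxj : x j ≠ ⊥ := by
    intro h
    exact hyj (le_bot_iff.mp (h ▸ hyx j))
  have hfin : y j = x j := by
    by_contra hcon
    have hlt : y j < x j := lt_of_le_of_ne (hyx j) hcon
    have := WithBot.add_lt_add_left hA hlt
    rw [e1, e2] at this
    exact lt_irrefl _ this
  exact ⟨j, ⟨hxj, hxi, e2, hub⟩, hfin⟩

/-- Main lemma: under conditions (i)-(iii) (packaged via the invariability selector `f`),
any subsolution `y ≤ x` agreeing with `x` at the distinguished node `i0` equals `x`. -/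
lemma below_eq (hx0 : x i0 ≠ ⊥)
    (hf : ∀ j, x j ≠ ⊥ → j ≠ i0 → Arc A x j (f j) ∧ ∀ k, Arc A x k (f j) → k = j)
    (hiso : ∀ W : Set (Fin n), W.Nonempty → W ⊂ Supp x → ¬ IsolatedSet A x W)
    (hcyc : ∀ (k₁ k₂ : ℕ) (c₁ c₂ : ℕ → Fin n), IsCycle A x k₁ c₁ → IsCycle A x k₂ c₂ →
      ¬ Disjoint (c₁ '' Set.Iio k₁) (c₂ '' Set.Iio k₂))
    {y : Fin n → WithBot ℝ}
    (hy : ∀ i, y i ≤ mpApply A y i) (hyx : ∀ i, y i ≤ x i) (hyi0 : y i0 = x i0) :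
    y = x := by
  -- backward closure along the unique in-arc of `f v`
  have hCl : ∀ v, x v ≠ ⊥ → v ≠ i0 → y (f v) = x (f v) → y v = x v := by
    intro v hv hvi0 hTfv
    obtain ⟨harc, huniq⟩ := hf v hv hvi0
    obtain ⟨j, hjarc, hjeq⟩ := key hy hyx hTfv harc.2.1 harc
    exact huniq j hjarc ▸ hjeq
  have hChain1 : ∀ (t : ℕ) (v : Fin n), x v ≠ ⊥ → f^[t] v = i0 → y v = x v := by
    intro t
    induction t with
    | zero =>
      intro v hv h
      rw [Function.iterate_zero_apply] at h
      rw [h]; exact hyi0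
    | succ t ih =>
      intro v hv h
      by_cases hvi0 : v = i0
      · rw [hvi0]; exact hyi0
      · rw [Function.iterate_succ_apply] at h
        have hfv : x (f v) ≠ ⊥ := (hf v hv hvi0).1.2.1
        exact hCl v hv hvi0 (ih (f v) hfv h)
  have hChain2 : ∀ (t : ℕ) (v : Fin n), x v ≠ ⊥ → (∀ s, f^[s] v ≠ i0) →
      y (f^[t] v) = x (f^[t] v) → y v = x v := by
    intro t
    induction t with
    | zero => intro v _ _ h; simpa using h
    | succ t ih =>
      intro v hv hni h
      have hvi0 : v ≠ i0 := by simpa using hni 0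
      have hfv : x (f v) ≠ ⊥ := (hf v hv hvi0).1.2.1
      rw [Function.iterate_succ_apply] at h
      refine hCl v hv hvi0 (ih (f v) hfv ?_ h)
      intro s
      rw [← Function.iterate_succ_apply]
      exact hni (s + 1)
  funext i
  by_cases hxi : x i = ⊥
  · rw [hxi]
    exact le_bot_iff.mp (hxi ▸ hyx i)
  by_contra hT0
  have hni : ∀ t, f^[t] i ≠ i0 := fun t h => hT0 (hChain1 t i hxi h)
  have hch : ∀ t, x (f^[t] i) ≠ ⊥ := fun t => chain_ne_bot hf t i hxi (fun s _ => hni s)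
  obtain ⟨k, hk1, hkp⟩ := periodic hf i hxi hni
  -- the cycle through `i`
  have hcycle0 : IsCycle A x ((k - 1) + 1) (fun t => f^[t] i) :=
    mkPathCycle hf i (k - 1) (fun t _ => ⟨hch t, hni t⟩) (close_arc hf i k hk1 hch hni hkp)
  have hC0T : ∀ v, (∃ t, f^[t] i = v) → y v ≠ x v := by
    rintro v ⟨t, ht⟩ hT
    exact hT0 (hChain2 t i hxi hni (by rw [ht]; exact hT))
  set W : Set (Fin n) := {v | ∃ t, f^[t] i = v} with hW_def
  have hWsub : W ⊆ Supp x := by rintro v ⟨t, ht⟩; exact ht ▸ hch t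
  have hWss : W ⊂ Supp x := by
    refine ssubset_iff_subset_ne.mpr ⟨hWsub, fun h => ?_⟩
    have : i0 ∈ W := h ▸ hx0
    obtain ⟨t, ht⟩ := this
    exact hni t ht
  have hnotiso := hiso W ⟨i, 0, rfl⟩ hWss
  have hcross : ∃ a b, Arc A x a b ∧ ¬ (a ∈ W ↔ b ∈ W) := by
    by_contra hno
    push_neg at hno
    exact hnotiso ⟨hWsub, fun a b hab => hno a b hab⟩
  obtain ⟨a, b, hab, hiff⟩ := hcross
  by_cases haW : a ∈ W
  · -- a ∈ W, b ∉ W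
    have hbW : b ∉ W := fun hb => hiff ⟨fun _ => hb, fun _ => haW⟩
    have hxb : x b ≠ ⊥ := hab.2.1
    by_cases hbr : ∃ s, f^[s] b = i0
    · -- b reaches i0
      set s := Nat.find hbr with hs_def
      have hs : f^[s] b = i0 := Nat.find_spec hbr
      have hmin : ∀ t < s, f^[t] b ≠ i0 := fun t ht => Nat.find_min hbr ht
      have hTb : y b = x b := hChain1 s b hxb hs
      by_cases him : ∃ j, x j ≠ ⊥ ∧ j ≠ i0 ∧ f j = b
      · obtain ⟨j, hj1, hj2, hj3⟩ := him
        have haj : a = j := (hf j hj1 hj2).2 a (by rw [hj3]; exact hab)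
        obtain ⟨ta, hta⟩ := haW
        refine hni ((s + 1) + ta) ?_
        rw [Function.iterate_add_apply, hta, haj, Function.iterate_succ_apply, hj3, hs]
      · -- b is not an f-image
        obtain ⟨c, hcarc, hceq⟩ := key hy hyx hTb hxb hab
        have hxc : x c ≠ ⊥ := hcarc.1
        by_cases hcr : ∃ u, f^[u] c = i0
        · set u := Nat.find hcr with hu_def
          have hu : f^[u] c = i0 := Nat.find_spec hcr
          have humin : ∀ t < u, f^[t] c ≠ i0 := fun t ht => Nat.find_min hcr ht
          rcases Nat.le_total u s with hus | hsu
          · -- c = f^[s-u] b : cycle along the path from b to c closed by arc c → b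
            have hcb : f^[s - u] b = c :=
              cancel hf u s b c hxb hxc hmin humin hus (by rw [hs, hu])
            have hcycle2 : IsCycle A x ((s - u) + 1) (fun t => f^[t] b) := by
              refine mkPathCycle hf b (s - u)
                (fun t ht => ⟨chain_ne_bot hf t b hxb (fun r hr => hmin r (by omega)),
                  hmin t (by omega)⟩) ?_
              rw [hcb]; exact hcarc
            have hnd := hcyc _ _ _ _ hcycle0 hcycle2
            rw [Set.not_disjoint_iff] at hnd
            obtain ⟨v, ⟨t1, ht1, hv1⟩, ⟨t2, ht2, hv2⟩⟩ := hnd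
            have hv1' : f^[t1] i = v := hv1
            have hv2' : f^[t2] b = v := hv2
            have ht2' : t2 < s - u + 1 := ht2
            refine hni ((s - t2) + t1) ?_
            rw [Function.iterate_add_apply, hv1', ← hv2', ← Function.iterate_add_apply,
              show s - t2 + t2 = s from by omega, hs]
          · -- b = f^[u-s] c
            have hcb : f^[u - s] c = b :=
              cancel hf s u c b hxc hxb humin hmin hsu (by rw [hs, hu])
            rcases Nat.eq_zero_or_pos (u - s) with he0 | hepos
            · -- b = c : loop at b
              have hbc : c = b := by
                rw [← hcb, he0, Function.iterate_zero_apply]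
              have hloop : IsCycle A x (0 + 1) (fun t => f^[t] b) := by
                refine mkPathCycle hf b 0 (fun t ht => absurd ht (by omega)) ?_
                show Arc A x b b
                exact hbc ▸ hcarc
              have hnd := hcyc _ _ _ _ hcycle0 hloop
              rw [Set.not_disjoint_iff] at hnd
              obtain ⟨v, ⟨t1, ht1, hv1⟩, ⟨t2, ht2, hv2⟩⟩ := hnd
              have hv1' : f^[t1] i = v := hv1
              have hv2' : f^[t2] b = v := hv2
              have ht2' : t2 < 0 + 1 := ht2
              have ht20 : t2 = 0 := by omega
              subst ht20
              rw [Function.iterate_zero_apply] at hv2'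
              refine hni (s + t1) ?_
              rw [Function.iterate_add_apply, hv1', ← hv2', hs]
            · -- b is an f-image after all : contradiction
              have hstep : f^[u - s - 1 + 1] c = f (f^[u - s - 1] c) :=
                Function.iterate_succ_apply' f (u - s - 1) c
              refine him ⟨f^[u - s - 1] c,
                chain_ne_bot hf _ c hxc (fun r hr => humin r (by omega)),
                humin _ (by omega), ?_⟩
              rw [← hstep, show u - s - 1 + 1 = u - s from by omega, hcb]
        · -- c never reaches i0 : c lies on a cycle intersecting the cycle of i
          push_neg at hcr
          have hchc : ∀ t, x (f^[t] c) ≠ ⊥ :=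
            fun t => chain_ne_bot hf t c hxc (fun r _ => hcr r)
          obtain ⟨kc, hkc1, hkcp⟩ := periodic hf c hxc hcr
          have hcycleC : IsCycle A x ((kc - 1) + 1) (fun t => f^[t] c) :=
            mkPathCycle hf c (kc - 1) (fun t _ => ⟨hchc t, hcr t⟩)
              (close_arc hf c kc hkc1 hchc hcr hkcp)
          have hnd := hcyc _ _ _ _ hcycle0 hcycleC
          rw [Set.not_disjoint_iff] at hnd
          obtain ⟨v, ⟨t1, ht1, hv1⟩, ⟨t2, ht2, hv2⟩⟩ := hnd
          have hv1' : f^[t1] i = v := hv1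
          have hv2' : f^[t2] c = v := hv2
          have hle : t2 ≤ kc * t2 := Nat.le_mul_of_pos_left t2 hkc1
          have hcfix : f^[kc * t2] c = c := by
            rw [Function.iterate_mul]
            exact Function.iterate_fixed hkcp t2
          refine hC0T c ⟨(kc * t2 - t2) + t1, ?_⟩ hceq
          rw [Function.iterate_add_apply, hv1', ← hv2', ← Function.iterate_add_apply,
            show kc * t2 - t2 + t2 = kc * t2 from by omega, hcfix]
    · -- b never reaches i0 : b lies on a cycle, so b ∈ W after all
      push_neg at hbr
      have hchb : ∀ t, x (f^[t] b) ≠ ⊥ :=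
        fun t => chain_ne_bot hf t b hxb (fun r _ => hbr r)
      obtain ⟨kb, hkb1, hkbp⟩ := periodic hf b hxb hbr
      have hcycleB : IsCycle A x ((kb - 1) + 1) (fun t => f^[t] b) :=
        mkPathCycle hf b (kb - 1) (fun t _ => ⟨hchb t, hbr t⟩)
          (close_arc hf b kb hkb1 hchb hbr hkbp)
      have hnd := hcyc _ _ _ _ hcycle0 hcycleB
      rw [Set.not_disjoint_iff] at hnd
      obtain ⟨v, ⟨t1, ht1, hv1⟩, ⟨t2, ht2, hv2⟩⟩ := hnd
      have hv1' : f^[t1] i = v := hv1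
      have hv2' : f^[t2] b = v := hv2
      have hle : t2 ≤ kb * t2 := Nat.le_mul_of_pos_left t2 hkb1
      have hbfix : f^[kb * t2] b = b := by
        rw [Function.iterate_mul]
        exact Function.iterate_fixed hkbp t2
      refine hbW ⟨(kb * t2 - t2) + t1, ?_⟩
      rw [Function.iterate_add_apply, hv1', ← hv2', ← Function.iterate_add_apply,
        show kb * t2 - t2 + t2 = kb * t2 from by omega, hbfix]
  · -- a ∉ W, b ∈ W : contradiction via the unique in-arc of b
    have hbW : b ∈ W := by
      by_contra hb
      exact hiff (iff_of_false haW hb)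
    obtain ⟨tb, htb⟩ := hbW
    have hstep : f^[tb + k - 1 + 1] i = f (f^[tb + k - 1] i) :=
      Function.iterate_succ_apply' f (tb + k - 1) i
    have hfp : f (f^[tb + k - 1] i) = b := by
      rw [← hstep, show tb + k - 1 + 1 = tb + k from by omega,
        Function.iterate_add_apply, hkp, htb]
    have hap := (hf (f^[tb + k - 1] i) (hch _) (hni _)).2 a (by rw [hfp]; exact hab)
    exact haW ⟨tb + k - 1, hap.symm⟩

end Aux


/-- under conditions (i)-(iii), `x` is an extremal in `𝒳'`. -/
theorem stmt13 {n : ℕ} (A : Matrix (Fin n) (Fin n) (WithBot ℝ)) (x : Fin n → WithBot ℝ)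
    (hx : x ∈ SuperEig A)
    (hiso : ∀ W : Set (Fin n), W.Nonempty → W ⊂ Supp x → ¬ IsolatedSet A x W)
    (hcyc : ∀ (k₁ k₂ : ℕ) (c₁ c₂ : ℕ → Fin n), IsCycle A x k₁ c₁ → IsCycle A x k₂ c₂ →
      ¬ Disjoint (c₁ '' Set.Iio k₁) (c₂ '' Set.Iio k₂))
    (hvar : ∃ i, VarNode A x i ∧ (∀ j, VarNode A x j → j = i) ∧
      ∀ j ∈ Supp x, j ≠ i → Invariable A x j) :
    IsExtremal A x := by
  obtain ⟨i0, hvarnode, huniqv, hinv⟩ := hvar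
  have hx0 : x i0 ≠ ⊥ := by rcases hvarnode with h | h; exacts [h.1, h.1]
  have hfex : ∀ j, ∃ p, x j ≠ ⊥ → j ≠ i0 → Arc A x j p ∧ ∀ k, Arc A x k p → k = j := by
    intro j
    by_cases h : x j ≠ ⊥ ∧ j ≠ i0
    · obtain ⟨-, p, hpne, hparc, hpuniq⟩ := hinv j h.1 h.2
      exact ⟨p, fun _ _ => ⟨hparc, hpuniq⟩⟩
    · exact ⟨j, fun h1 h2 => absurd ⟨h1, h2⟩ h⟩
  choose f hf using hfex
  have hf' : ∀ j, x j ≠ ⊥ → j ≠ i0 → Arc A x j (f j) ∧ ∀ k, Arc A x k (f j) → k = j :=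
    fun j h1 h2 => hf j h1 h2
  constructor
  · exact Or.inl hx
  · intro y hy z hz hxyz
    have hyx : ∀ i, y i ≤ x i := fun i => by rw [hxyz]; exact le_sup_left
    have hzx : ∀ i, z i ≤ x i := fun i => by rw [hxyz]; exact le_sup_right
    have hmain : ∀ w, w ∈ SuperEig' A → (∀ i, w i ≤ x i) → w i0 = x i0 → w = x := by
      intro w hw hwx hwi0
      rcases hw with hw | hw
      · exact below_eq hx0 hf' hiso hcyc hw.1 hwx hwi0
      · exfalso
        rw [Set.mem_singleton_iff] at hw
        rw [hw] at hwi0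
        exact hx0 hwi0.symm
    have hx0eq : x i0 = y i0 ⊔ z i0 := congrFun hxyz i0
    rcases le_total (y i0) (z i0) with h | h
    · right
      refine (hmain z hz hzx ?_).symm
      rw [hx0eq, sup_eq_right.mpr h]
    · left
      refine (hmain y hy hyx ?_).symm
      rw [hx0eq, sup_eq_left.mpr h]
end
end
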